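/- arXiv:1908.04524 — 3 statements merged into one kernel-verified Lean document; each statement's English description precedes it below -/
import Mathlib

section
/- In a bipolar orientation of a planar graph with source s and sink t on the outer face, every face f has exactly two special vertices s_f and t_f such that the boundary of f consists of two non-empty directed paths from s_f to t_f. -/
attribute [local instance] Classical.propDecidable

/-- The number of cycles (orbits) of a permutation `σ` of a finite type; when `σ` is
the face-tracing permutation of a combinatorial map, this is the number of faces. -/
noncomputable def numOrbits {D : Type*} [Fintype D] (σ : Equiv.Perm D) : ℕ :=
  Fintype.card (Quotient (Setoid.mk σ.SameCycle
    ⟨fun _ => Equiv.Perm.SameCycle.refl σ _, Equiv.Perm.SameCycle.symm,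
      Equiv.Perm.SameCycle.trans⟩))

theorem Equiv.Perm.apply_inv_self {β : Type*} (f : Equiv.Perm β) (x : β) : f (f⁻¹ x) = x :=
  f.apply_symm_apply x

theorem Equiv.Perm.inv_apply_self {β : Type*} (f : Equiv.Perm β) (x : β) : f⁻¹ (f x) = x :=
  f.symm_apply_apply x

section Aux
set_option linter.unusedSectionVars false
variable {α : Type*} [Fintype α] [DecidableEq α]

lemma image_eq_of_mapsTo (σ : Equiv.Perm α) (S : Finset α) (h : ∀ a ∈ S, σ a ∈ S) :
    S.image σ = S := by
  apply Finset.eq_of_subset_of_card_le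
  · intro b hb; obtain ⟨a, ha, rfl⟩ := Finset.mem_image.1 hb; exact h a ha
  · rw [Finset.card_image_of_injective _ σ.injective]

lemma card_filter_comp (σ : Equiv.Perm α) (S : Finset α) (h : ∀ a ∈ S, σ a ∈ S)
    (P : α → Prop) :
    (S.filter fun a => P (σ a)).card = (S.filter P).card := by
  have himg : S.image σ = S := image_eq_of_mapsTo σ S h
  apply Finset.card_bij (fun a _ => σ a)
  · intro a ha
    simp only [Finset.mem_filter] at ha ⊢
    exact ⟨h a ha.1, ha.2⟩
  · intro a ha b hb hab; exact σ.injective hab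
  · intro b hb
    simp only [Finset.mem_filter] at hb
    have : b ∈ S.image σ := by rw [himg]; exact hb.1
    obtain ⟨a, ha, rfl⟩ := Finset.mem_image.1 this
    exact ⟨a, Finset.mem_filter.2 ⟨ha, hb.2⟩, rfl⟩

lemma filter_and_split (S : Finset α) (P Q : α → Prop) :
    (S.filter fun a => P a ∧ Q a).card + (S.filter fun a => P a ∧ ¬ Q a).card
      = (S.filter P).card := by
  rw [← Finset.filter_filter, ← Finset.filter_filter]
  exact Finset.card_filter_add_card_filter_not _

lemma transition_balance (σ : Equiv.Perm α) (S : Finset α) (h : ∀ a ∈ S, σ a ∈ S)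
    (P : α → Prop) :
    (S.filter fun a => P a ∧ ¬ P (σ a)).card = (S.filter fun a => ¬ P a ∧ P (σ a)).card := by
  have h1 := filter_and_split S P (fun a => P (σ a))
  have h2 : (S.filter fun a => P (σ a) ∧ P a).card + (S.filter fun a => P (σ a) ∧ ¬ P a).card
      = (S.filter fun a => P (σ a)).card := filter_and_split S (fun a => P (σ a)) P
  have h3 := card_filter_comp σ S h P
  have e1 : (S.filter fun a => P a ∧ P (σ a)) = (S.filter fun a => P (σ a) ∧ P a) := by
    apply Finset.filter_congr; intro a _; exact ⟨fun ⟨x,y⟩ => ⟨y,x⟩, fun ⟨x,y⟩ => ⟨y,x⟩⟩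
  have e2 : (S.filter fun a => ¬ P a ∧ P (σ a)) = (S.filter fun a => P (σ a) ∧ ¬ P a) := by
    apply Finset.filter_congr; intro a _; exact ⟨fun ⟨x,y⟩ => ⟨y,x⟩, fun ⟨x,y⟩ => ⟨y,x⟩⟩
  rw [e1] at h1; rw [e2]; omega

lemma exists_transition (f : α → α) (P : α → Prop) :
    ∀ (n : ℕ) (a : α), ¬ P a → P (f^[n] a) → ∃ k, ¬ P (f^[k] a) ∧ P (f^[k+1] a) := by
  intro n
  induction n with
  | zero => intro a ha hb; exact absurd hb ha
  | succ n ih =>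
    intro a ha hb
    by_cases hn : P (f^[n] a)
    · exact ih a ha hn
    · exact ⟨n, hn, by simpa [Function.iterate_succ_apply'] using hb⟩

lemma sum_eq_card_forall_one {ι : Type*} (s : Finset ι) (f : ι → ℕ)
    (h1 : ∀ i ∈ s, 1 ≤ f i) (h : ∑ i ∈ s, f i = s.card) : ∀ i ∈ s, f i = 1 := by
  have key : ∀ i ∈ s, (fun _ => (1:ℕ)) i = f i := by
    rw [← Finset.sum_eq_sum_iff_of_le h1] <;> simp [h]
  intro i hi; exact (key i hi).symm

end Aux

/-- **Faces of a bipolar orientation.** Let `D` be an orientation of a connected plane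
graph, the plane embedding being given combinatorially by a rotation system `ρ` on the
darts satisfying Euler's formula `|V| - |E| + |F| = 2`, where the faces are the orbits
of the face-tracing permutation `φ = ρ ∘ rev`.  Assume the orientation is bipolar:
acyclic with a unique source `s` and a unique sink `t`, both lying on the outer face.
Then every face `f` (traced by iterating `φ` from any dart `d`, with period `m`) has
exactly one vertex `s_f` at which both boundary edges leave and exactly one vertex
`t_f` at which both boundary edges enter; i.e. its boundary consists of two non-empty
directed paths from `s_f` to `t_f`. -/
theorem bipolar_orientation_faces {V : Type*} [Fintype V] [DecidableEq V]
    (D : V → V → Prop) (hasym : ∀ u v, D u v → ¬ D v u)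
    (ρ rev φ : Equiv.Perm {p : V × V // D p.1 p.2 ∨ D p.2 p.1})
    (hρ_tail : ∀ d, (ρ d).1.1 = d.1.1)
    (hρ_cyclic : ∀ d d' : {p : V × V // D p.1 p.2 ∨ D p.2 p.1},
      d.1.1 = d'.1.1 → ∃ n : ℕ, (⇑ρ)^[n] d = d')
    (hrev : ∀ d, (rev d).1 = (d.1.2, d.1.1))
    (hφ : ∀ d, φ d = ρ (rev d))
    (hconn : ∀ u v : V, Relation.ReflTransGen (fun a b => D a b ∨ D b a) u v)
    (heuler : (Fintype.card V : ℤ)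
        - Fintype.card {p : V × V // D p.1 p.2 ∨ D p.2 p.1} / 2 + numOrbits φ = 2)
    (hacyclic : ∀ v : V, ¬ Relation.TransGen D v v)
    (s t : V)
    (hsource : (∀ u, ¬ D u s) ∧ ∀ v, (∀ u, ¬ D u v) → v = s)
    (hsink : (∀ u, ¬ D t u) ∧ ∀ v, (∀ u, ¬ D v u) → v = t)
    (d₀ : {p : V × V // D p.1 p.2 ∨ D p.2 p.1})
    (hs_outer : ∃ i : ℕ, ((⇑φ)^[i] d₀).1.1 = s)
    (ht_outer : ∃ i : ℕ, ((⇑φ)^[i] d₀).1.1 = t) :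
    ∀ d : {p : V × V // D p.1 p.2 ∨ D p.2 p.1},
      let m := Function.minimalPeriod (⇑φ) d
      let fwd : {p : V × V // D p.1 p.2 ∨ D p.2 p.1} → Prop := fun e => D e.1.1 e.1.2
      (∃! sf : V, ∃ i < m, ((⇑φ)^[i] d).1.1 = sf ∧
        fwd ((⇑φ)^[i] d) ∧ ¬ fwd ((⇑φ)^[(i + (m - 1)) % m] d)) ∧
      (∃! tf : V, ∃ i < m, ((⇑φ)^[i] d).1.1 = tf ∧
        ¬ fwd ((⇑φ)^[i] d) ∧ fwd ((⇑φ)^[(i + (m - 1)) % m] d)) := by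
  classical
  let α := {p : V × V // D p.1 p.2 ∨ D p.2 p.1}
  -- basic dart facts
  let fwd : α → Prop := fun e => D e.1.1 e.1.2
  have hbwd : ∀ e : α, ¬ fwd e ↔ D e.1.2 e.1.1 := by
    intro e
    constructor
    · intro h; rcases e.2 with h1 | h1
      · exact absurd h1 h
      · exact h1
    · intro h hf; exact hasym _ _ hf h
  have hrev_invol : ∀ e : α, rev (rev e) = e := by
    intro e; apply Subtype.ext
    simp [hrev]
  have hφinv : ∀ e : α, φ⁻¹ e = rev (ρ⁻¹ e) := by
    intro e
    apply φ.injective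
    rw [Equiv.Perm.apply_inv_self, hφ, hrev_invol, Equiv.Perm.apply_inv_self]
  have hρinv_tail : ∀ e : α, (ρ⁻¹ e).1.1 = e.1.1 := by
    intro e
    conv_rhs => rw [← Equiv.Perm.apply_inv_self ρ e]
    rw [hρ_tail]
  have hρiter_tail : ∀ (n : ℕ) (e : α), ((⇑ρ)^[n] e).1.1 = e.1.1 := by
    intro n
    induction n with
    | zero => intro e; rfl
    | succ n ih => intro e; rw [Function.iterate_succ_apply', hρ_tail]; exact ih e
  have hφ_head : ∀ e : α, (φ e).1.1 = e.1.2 := by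
    intro e; rw [hφ, hρ_tail, hrev]
  -- source / sink corner darts
  let src : α → Prop := fun e => fwd e ∧ fwd (ρ⁻¹ e)
  let snk : α → Prop := fun e => ¬ fwd e ∧ ¬ fwd (ρ⁻¹ e)
  have hfwd_rev : ∀ e : α, fwd (rev e) ↔ ¬ fwd e := by
    intro e
    rw [hbwd]
    show D (rev e).1.1 (rev e).1.2 ↔ _
    rw [hrev]
  have hsrc_iff : ∀ e : α, src e ↔ (fwd e ∧ ¬ fwd (φ⁻¹ e)) := by
    intro e
    rw [hφinv, hfwd_rev, not_not]
  have hsnk_iff : ∀ e : α, snk e ↔ (¬ fwd e ∧ fwd (φ⁻¹ e)) := by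
    intro e
    rw [hφinv, hfwd_rev]
  -- global counting identities
  have hAM := filter_and_split (Finset.univ : Finset α) (fun e => fwd e) (fun e => fwd (ρ⁻¹ e))
  have hBM := filter_and_split (Finset.univ : Finset α) (fun e => ¬ fwd e) (fun e => fwd (ρ⁻¹ e))
  have hMM := transition_balance ρ⁻¹ Finset.univ (fun a _ => Finset.mem_univ _)
    (fun e : α => fwd e)
  have hEI : ((Finset.univ : Finset α).filter (fun e => ¬ fwd e)).card
      = ((Finset.univ : Finset α).filter (fun e => fwd e)).card := by
    have h1 := card_filter_comp rev Finset.univ (fun a _ => Finset.mem_univ _)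
      (fun e : α => fwd e)
    rw [← h1]
    congr 1
    apply Finset.filter_congr
    intro e _
    exact (hfwd_rev e).symm
  have hsplit := Finset.card_filter_add_card_filter_not
    (s := (Finset.univ : Finset α)) (p := fun e => fwd e)
  have hcard2 : Fintype.card α
      = 2 * ((Finset.univ : Finset α).filter (fun e => fwd e)).card := by
    rw [← Finset.card_univ (α := α)]
    omega
  -- s ≠ t
  have hst : s ≠ t := by
    intro hseqt
    obtain ⟨i, hi⟩ := hs_outer
    rcases ((⇑φ)^[i] d₀).2 with h1 | h1
    · rw [hi] at h1
      exact hsink.1 _ (hseqt ▸ h1)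
    · rw [hi] at h1
      exact hsource.1 _ h1
  -- every non-s non-t vertex supports a transition dart
  have hMv : ∀ v : V, v ≠ s → v ≠ t → ∃ e : α, e.1.1 = v ∧ fwd e ∧ ¬ fwd (ρ⁻¹ e) := by
    intro v hvs hvt
    have hout : ∃ u, D v u := by
      by_contra h
      push_neg at h
      exact hvt (hsink.2 v h)
    have hin : ∃ u, D u v := by
      by_contra h
      push_neg at h
      exact hvs (hsource.2 v h)
    obtain ⟨u, hu⟩ := hout
    obtain ⟨u', hu'⟩ := hin
    have hg : fwd (⟨(v, u), Or.inl hu⟩ : α) := hu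
    have hg' : ¬ fwd (⟨(v, u'), Or.inr hu'⟩ : α) := hasym u' v hu'
    obtain ⟨n, hn⟩ := hρ_cyclic (⟨(v, u'), Or.inr hu'⟩ : α) (⟨(v, u), Or.inl hu⟩ : α) rfl
    obtain ⟨k, hk1, hk2⟩ := exists_transition (⇑ρ) fwd n _ hg' (by rw [hn]; exact hg)
    refine ⟨(⇑ρ)^[k+1] (⟨(v, u'), Or.inr hu'⟩ : α), ?_, hk2, ?_⟩
    · exact hρiter_tail _ _
    · have : ρ⁻¹ ((⇑ρ)^[k+1] (⟨(v, u'), Or.inr hu'⟩ : α)) = (⇑ρ)^[k] (⟨(v, u'), Or.inr hu'⟩ : α) := by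
        rw [Function.iterate_succ_apply', Equiv.Perm.inv_apply_self]
      rw [this]
      exact hk1
  -- lower bound for the number of transition darts
  have hMlow : Fintype.card V
      ≤ ((Finset.univ : Finset α).filter (fun e => fwd e ∧ ¬ fwd (ρ⁻¹ e))).card + 2 := by
    set T : Finset V := (Finset.univ.erase s).erase t with hT
    have h1 : t ∈ Finset.univ.erase s := Finset.mem_erase.2 ⟨Ne.symm hst, Finset.mem_univ _⟩
    have h2 : s ∈ (Finset.univ : Finset V) := Finset.mem_univ _
    have hTcard : T.card + 2 = Fintype.card V := by
      have h3 : 1 ≤ (Finset.univ.erase s).card := Finset.card_pos.2 ⟨t, h1⟩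
      have h4 : (Finset.univ.erase s).card = Fintype.card V - 1 := by
        rw [Finset.card_erase_of_mem h2, Finset.card_univ]
      have h5 : 1 ≤ Fintype.card V := Fintype.card_pos_iff.2 ⟨s⟩
      rw [hT, Finset.card_erase_of_mem h1, h4]
      omega
    have hinj : ∀ v ∈ T,
        ∃ e ∈ (Finset.univ : Finset α).filter (fun e => fwd e ∧ ¬ fwd (ρ⁻¹ e)), e.1.1 = v := by
      intro v hv
      rw [hT] at hv
      have hvt : v ≠ t := (Finset.mem_erase.1 hv).1
      have hvs : v ≠ s := (Finset.mem_erase.1 (Finset.mem_erase.1 hv).2).1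
      obtain ⟨e, he1, he2, he3⟩ := hMv v hvs hvt
      exact ⟨e, Finset.mem_filter.2 ⟨Finset.mem_univ _, he2, he3⟩, he1⟩
    have hTM : T.card ≤ ((Finset.univ : Finset α).filter (fun e => fwd e ∧ ¬ fwd (ρ⁻¹ e))).card := by
      choose f hf1 hf2 using hinj
      apply Finset.card_le_card_of_injOn (fun v => if h : v ∈ T then f v h else d₀)
      · intro v hv
        simp only [Finset.mem_coe] at hv ⊢
        rw [dif_pos hv]
        exact hf1 v hv
      · intro v1 h1' v2 h2' heq
        have h1'' : v1 ∈ T := h1'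
        have h2'' : v2 ∈ T := h2'
        simp only [dif_pos h1'', dif_pos h2''] at heq
        rw [← hf2 v1 h1'', ← hf2 v2 h2'', heq]
    omega
  -- iterates stay in the same cycle
  have hscit : ∀ (j : ℕ) (x : α), φ.SameCycle x ((⇑φ)^[j] x) := by
    intro j x
    exact ⟨(j : ℤ), by rw [zpow_natCast]; rfl⟩
  have hm0 : ∀ x : α, 0 < Function.minimalPeriod (⇑φ) x := by
    intro x
    have hper' : Function.IsPeriodicPt (⇑φ) (orderOf φ) x := by
      show (⇑φ)^[orderOf φ] x = x
      rw [Equiv.Perm.iterate_eq_pow, pow_orderOf_eq_one]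
      rfl
    exact hper'.minimalPeriod_pos (orderOf_pos φ)
  -- every orbit contains a forward dart
  have hOrbFwd : ∀ e : α, ∃ j, fwd ((⇑φ)^[j] e) := by
    intro e
    by_contra hcon
    push_neg at hcon
    have claim : ∀ j, Relation.TransGen D (((⇑φ)^[j+1] e)).1.1 e.1.1 := by
      intro j
      induction j with
      | zero =>
        apply Relation.TransGen.single
        show D (((⇑φ)^[1] e)).1.1 e.1.1
        have h9 : (((⇑φ)^[1] e)).1.1 = e.1.2 := hφ_head e
        rw [h9]
        exact (hbwd e).1 (hcon 0)
      | succ j ih =>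
        apply Relation.TransGen.head _ ih
        have h9 : (((⇑φ)^[j+2] e)).1.1 = (((⇑φ)^[j+1] e)).1.2 := by
          rw [Function.iterate_succ_apply' (⇑φ) (j+1) e]
          exact hφ_head _
        rw [h9]
        exact (hbwd _).1 (hcon (j+1))
    have hme : (⇑φ)^[Function.minimalPeriod ⇑φ e] e = e := Function.iterate_minimalPeriod
    have hc := claim (Function.minimalPeriod ⇑φ e - 1)
    have hidx : Function.minimalPeriod ⇑φ e - 1 + 1 = Function.minimalPeriod ⇑φ e := by
      have := hm0 e
      omega
    rw [hidx, hme] at hc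
    exact hacyclic _ hc
  -- every orbit contains a backward dart
  have hOrbBwd : ∀ e : α, ∃ j, ¬ fwd ((⇑φ)^[j] e) := by
    intro e
    by_contra hcon
    push_neg at hcon
    have claim : ∀ j, Relation.TransGen D e.1.1 (((⇑φ)^[j+1] e)).1.1 := by
      intro j
      induction j with
      | zero =>
        apply Relation.TransGen.single
        show D e.1.1 (((⇑φ)^[1] e)).1.1
        have h9 : (((⇑φ)^[1] e)).1.1 = e.1.2 := hφ_head e
        rw [h9]
        exact hcon 0
      | succ j ih =>
        apply Relation.TransGen.tail ih
        have h9 : (((⇑φ)^[j+2] e)).1.1 = (((⇑φ)^[j+1] e)).1.2 := by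
          rw [Function.iterate_succ_apply' (⇑φ) (j+1) e]
          exact hφ_head _
        rw [h9]
        exact hcon (j+1)
    have hme : (⇑φ)^[Function.minimalPeriod ⇑φ e] e = e := Function.iterate_minimalPeriod
    have hc := claim (Function.minimalPeriod ⇑φ e - 1)
    have hidx : Function.minimalPeriod ⇑φ e - 1 + 1 = Function.minimalPeriod ⇑φ e := by
      have := hm0 e
      omega
    rw [hidx, hme] at hc
    exact hacyclic _ hc
  -- shifting by multiples of the minimal period
  have hperiod_shift : ∀ (x : α) (c a : ℕ),
      (⇑φ)^[a + c * Function.minimalPeriod (⇑φ) x] x = (⇑φ)^[a] x := by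
    intro x c
    induction c with
    | zero => intro a; simp
    | succ c ih =>
      intro a
      have h9 : a + (c+1) * Function.minimalPeriod (⇑φ) x
          = (a + c * Function.minimalPeriod (⇑φ) x) + Function.minimalPeriod (⇑φ) x := by ring
      rw [h9, Function.iterate_add_minimalPeriod_eq]
      exact ih a
  -- every orbit contains a face-source dart
  have hsrc_ex : ∀ e : α, ∃ e', φ.SameCycle e e' ∧ (fwd e' ∧ fwd (ρ⁻¹ e')) := by
    intro e
    obtain ⟨j1, hf1⟩ := hOrbFwd e
    obtain ⟨j0, hb0⟩ := hOrbBwd e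
    have hge : j0 ≤ j1 + j0 * Function.minimalPeriod (⇑φ) e := by
      have h9 : j0 ≤ j0 * Function.minimalPeriod (⇑φ) e :=
        Nat.le_mul_of_pos_right j0 (hm0 e)
      omega
    have hit : (⇑φ)^[(j1 + j0 * Function.minimalPeriod (⇑φ) e) - j0] ((⇑φ)^[j0] e)
        = (⇑φ)^[j1] e := by
      rw [← Function.iterate_add_apply]
      have h9 : (j1 + j0 * Function.minimalPeriod (⇑φ) e) - j0 + j0
          = j1 + j0 * Function.minimalPeriod (⇑φ) e := by omega
      rw [h9]
      exact hperiod_shift e j0 j1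
    obtain ⟨k, hk1, hk2⟩ := exists_transition (⇑φ) fwd
      ((j1 + j0 * Function.minimalPeriod (⇑φ) e) - j0) ((⇑φ)^[j0] e) hb0
      (by rw [hit]; exact hf1)
    refine ⟨(⇑φ)^[k+1] ((⇑φ)^[j0] e), ?_, hk2, ?_⟩
    · rw [← Function.iterate_add_apply]
      exact hscit _ _
    · have h3 : φ⁻¹ ((⇑φ)^[k+1] ((⇑φ)^[j0] e)) = (⇑φ)^[k] ((⇑φ)^[j0] e) := by
        apply φ.injective
        rw [Equiv.Perm.apply_inv_self, Function.iterate_succ_apply']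
      have h4 : ¬ fwd (φ⁻¹ ((⇑φ)^[k+1] ((⇑φ)^[j0] e))) := by
        rw [h3]; exact hk1
      rw [hφinv, hfwd_rev, not_not] at h4
      exact h4
  -- every orbit contains a face-sink dart
  have hsnk_ex : ∀ e : α, ∃ e', φ.SameCycle e e' ∧ (¬ fwd e' ∧ ¬ fwd (ρ⁻¹ e')) := by
    intro e
    obtain ⟨j1, hf1⟩ := hOrbFwd e
    obtain ⟨j0, hb0⟩ := hOrbBwd e
    have hge : j1 ≤ j0 + j1 * Function.minimalPeriod (⇑φ) e := by
      have h9 : j1 ≤ j1 * Function.minimalPeriod (⇑φ) e :=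
        Nat.le_mul_of_pos_right j1 (hm0 e)
      omega
    have hit : (⇑φ)^[(j0 + j1 * Function.minimalPeriod (⇑φ) e) - j1] ((⇑φ)^[j1] e)
        = (⇑φ)^[j0] e := by
      rw [← Function.iterate_add_apply]
      have h9 : (j0 + j1 * Function.minimalPeriod (⇑φ) e) - j1 + j1
          = j0 + j1 * Function.minimalPeriod (⇑φ) e := by omega
      rw [h9]
      exact hperiod_shift e j1 j0
    obtain ⟨k, hk1, hk2⟩ := exists_transition (⇑φ) (fun x => ¬ fwd x)
      ((j0 + j1 * Function.minimalPeriod (⇑φ) e) - j1) ((⇑φ)^[j1] e)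
      (not_not.2 hf1) (by rw [hit]; exact hb0)
    refine ⟨(⇑φ)^[k+1] ((⇑φ)^[j1] e), ?_, hk2, ?_⟩
    · rw [← Function.iterate_add_apply]
      exact hscit _ _
    · have h3 : φ⁻¹ ((⇑φ)^[k+1] ((⇑φ)^[j1] e)) = (⇑φ)^[k] ((⇑φ)^[j1] e) := by
        apply φ.injective
        rw [Equiv.Perm.apply_inv_self, Function.iterate_succ_apply']
      have h4 : fwd (φ⁻¹ ((⇑φ)^[k+1] ((⇑φ)^[j1] e))) := by
        rw [h3]; exact not_not.1 hk1
      rw [hφinv, hfwd_rev] at h4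
      exact h4
  have hAM2 : ((Finset.univ : Finset α).filter (fun e => fwd e ∧ fwd (ρ⁻¹ e))).card
      + ((Finset.univ : Finset α).filter (fun e => fwd e ∧ ¬ fwd (ρ⁻¹ e))).card
      = ((Finset.univ : Finset α).filter (fun e => fwd e)).card := by
    convert hAM using 3 <;> congr!
  have hBM2 : ((Finset.univ : Finset α).filter (fun e => ¬ fwd e ∧ fwd (ρ⁻¹ e))).card
      + ((Finset.univ : Finset α).filter (fun e => ¬ fwd e ∧ ¬ fwd (ρ⁻¹ e))).card
      = ((Finset.univ : Finset α).filter (fun e => ¬ fwd e)).card := by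
    convert hBM using 3 <;> congr!
  have hMM2 : ((Finset.univ : Finset α).filter (fun e => fwd e ∧ ¬ fwd (ρ⁻¹ e))).card
      = ((Finset.univ : Finset α).filter (fun e => ¬ fwd e ∧ fwd (ρ⁻¹ e))).card := by
    convert hMM using 3 <;> congr!
  -- the face setoid
  let st : Setoid α := Setoid.mk φ.SameCycle
    ⟨fun _ => Equiv.Perm.SameCycle.refl φ _, Equiv.Perm.SameCycle.symm,
      Equiv.Perm.SameCycle.trans⟩
  have hF : numOrbits φ = Fintype.card (Quotient st) := rfl
  -- fiberwise decomposition of source darts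
  have hfibA : ((Finset.univ : Finset α).filter (fun e => fwd e ∧ fwd (ρ⁻¹ e))).card
      = ∑ c ∈ (Finset.univ : Finset (Quotient st)),
        (((Finset.univ : Finset α).filter (fun e => fwd e ∧ fwd (ρ⁻¹ e))).filter
          (fun e => Quotient.mk st e = c)).card :=
    Finset.card_eq_sum_card_fiberwise (fun e _ => Finset.mem_univ _)
  have hfibB : ((Finset.univ : Finset α).filter (fun e => ¬ fwd e ∧ ¬ fwd (ρ⁻¹ e))).card
      = ∑ c ∈ (Finset.univ : Finset (Quotient st)),
        (((Finset.univ : Finset α).filter (fun e => ¬ fwd e ∧ ¬ fwd (ρ⁻¹ e))).filter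
          (fun e => Quotient.mk st e = c)).card :=
    Finset.card_eq_sum_card_fiberwise (fun e _ => Finset.mem_univ _)
  have hfibA_pos : ∀ c : Quotient st,
      1 ≤ (((Finset.univ : Finset α).filter (fun e => fwd e ∧ fwd (ρ⁻¹ e))).filter
        (fun e => Quotient.mk st e = c)).card := by
    intro c
    obtain ⟨x, hx⟩ := Quotient.exists_rep c
    obtain ⟨e', hsc, hsrc'⟩ := hsrc_ex x
    refine Finset.card_pos.2 ⟨e', Finset.mem_filter.2
      ⟨Finset.mem_filter.2 ⟨Finset.mem_univ _, hsrc'⟩, ?_⟩⟩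
    rw [← hx]
    exact Quotient.sound (Setoid.symm hsc)
  have hfibB_pos : ∀ c : Quotient st,
      1 ≤ (((Finset.univ : Finset α).filter (fun e => ¬ fwd e ∧ ¬ fwd (ρ⁻¹ e))).filter
        (fun e => Quotient.mk st e = c)).card := by
    intro c
    obtain ⟨x, hx⟩ := Quotient.exists_rep c
    obtain ⟨e', hsc, hsnk'⟩ := hsnk_ex x
    refine Finset.card_pos.2 ⟨e', Finset.mem_filter.2
      ⟨Finset.mem_filter.2 ⟨Finset.mem_univ _, hsnk'⟩, ?_⟩⟩
    rw [← hx]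
    exact Quotient.sound (Setoid.symm hsc)
  have hFA : Fintype.card (Quotient st)
      ≤ ((Finset.univ : Finset α).filter (fun e => fwd e ∧ fwd (ρ⁻¹ e))).card := by
    rw [hfibA]
    calc Fintype.card (Quotient st)
        = ∑ _c ∈ (Finset.univ : Finset (Quotient st)), 1 := by
          rw [Finset.sum_const, smul_eq_mul, mul_one, Finset.card_univ]
      _ ≤ _ := Finset.sum_le_sum (fun c _ => hfibA_pos c)
  have hFB : Fintype.card (Quotient st)
      ≤ ((Finset.univ : Finset α).filter (fun e => ¬ fwd e ∧ ¬ fwd (ρ⁻¹ e))).card := by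
    rw [hfibB]
    calc Fintype.card (Quotient st)
        = ∑ _c ∈ (Finset.univ : Finset (Quotient st)), 1 := by
          rw [Finset.sum_const, smul_eq_mul, mul_one, Finset.card_univ]
      _ ≤ _ := Finset.sum_le_sum (fun c _ => hfibB_pos c)
  -- Euler's formula, in ℕ form
  have h6 : ((Fintype.card {p : V × V // D p.1 p.2 ∨ D p.2 p.1} : ℤ))
      = 2 * (((Finset.univ : Finset α).filter (fun e => fwd e)).card : ℤ) := by
    exact_mod_cast hcard2
  rw [h6, Int.mul_ediv_cancel_left _ (by norm_num : (2:ℤ) ≠ 0), hF] at heuler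
  -- the two cardinality identities
  have hAcard : ((Finset.univ : Finset α).filter (fun e => fwd e ∧ fwd (ρ⁻¹ e))).card
      = Fintype.card (Quotient st) := by omega
  have hBcard : ((Finset.univ : Finset α).filter (fun e => ¬ fwd e ∧ ¬ fwd (ρ⁻¹ e))).card
      = Fintype.card (Quotient st) := by omega
  -- every fiber has exactly one element
  have hfib1A : ∀ c ∈ (Finset.univ : Finset (Quotient st)),
      (((Finset.univ : Finset α).filter (fun e => fwd e ∧ fwd (ρ⁻¹ e))).filter
        (fun e => Quotient.mk st e = c)).card = 1 := by
    apply sum_eq_card_forall_one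
    · exact fun c _ => hfibA_pos c
    · rw [← hfibA, hAcard, Finset.card_univ]
  have hfib1B : ∀ c ∈ (Finset.univ : Finset (Quotient st)),
      (((Finset.univ : Finset α).filter (fun e => ¬ fwd e ∧ ¬ fwd (ρ⁻¹ e))).filter
        (fun e => Quotient.mk st e = c)).card = 1 := by
    apply sum_eq_card_forall_one
    · exact fun c _ => hfibB_pos c
    · rw [← hfibB, hBcard, Finset.card_univ]
  -- uniqueness of source/sink darts within a cycle
  have huniqA : ∀ (x e1 e2 : α), φ.SameCycle x e1 → φ.SameCycle x e2 →
      (fwd e1 ∧ fwd (ρ⁻¹ e1)) → (fwd e2 ∧ fwd (ρ⁻¹ e2)) → e1 = e2 := by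
    intro x e1 e2 h1 h2 hs1 hs2
    have hc := hfib1A (Quotient.mk st x) (Finset.mem_univ _)
    apply Finset.card_le_one.1 (le_of_eq hc)
    · exact Finset.mem_filter.2 ⟨Finset.mem_filter.2 ⟨Finset.mem_univ _, hs1⟩,
        Quotient.sound (Setoid.symm h1)⟩
    · exact Finset.mem_filter.2 ⟨Finset.mem_filter.2 ⟨Finset.mem_univ _, hs2⟩,
        Quotient.sound (Setoid.symm h2)⟩
  have huniqB : ∀ (x e1 e2 : α), φ.SameCycle x e1 → φ.SameCycle x e2 →
      (¬ fwd e1 ∧ ¬ fwd (ρ⁻¹ e1)) → (¬ fwd e2 ∧ ¬ fwd (ρ⁻¹ e2)) → e1 = e2 := by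
    intro x e1 e2 h1 h2 hs1 hs2
    have hc := hfib1B (Quotient.mk st x) (Finset.mem_univ _)
    apply Finset.card_le_one.1 (le_of_eq hc)
    · exact Finset.mem_filter.2 ⟨Finset.mem_filter.2 ⟨Finset.mem_univ _, hs1⟩,
        Quotient.sound (Setoid.symm h1)⟩
    · exact Finset.mem_filter.2 ⟨Finset.mem_filter.2 ⟨Finset.mem_univ _, hs2⟩,
        Quotient.sound (Setoid.symm h2)⟩
  -- final assembly
  intro d
  show (∃! sf : V, ∃ i < Function.minimalPeriod (⇑φ) d, ((⇑φ)^[i] d).1.1 = sf ∧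
        fwd ((⇑φ)^[i] d) ∧ ¬ fwd ((⇑φ)^[(i + (Function.minimalPeriod (⇑φ) d - 1))
          % Function.minimalPeriod (⇑φ) d] d)) ∧
      (∃! tf : V, ∃ i < Function.minimalPeriod (⇑φ) d, ((⇑φ)^[i] d).1.1 = tf ∧
        ¬ fwd ((⇑φ)^[i] d) ∧ fwd ((⇑φ)^[(i + (Function.minimalPeriod (⇑φ) d - 1))
          % Function.minimalPeriod (⇑φ) d] d))
  have hmd : (⇑φ)^[Function.minimalPeriod (⇑φ) d] d = d := Function.iterate_minimalPeriod
  have hmdpos := hm0 d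
  have hinviter : ∀ i : ℕ, (⇑φ)^[(i + (Function.minimalPeriod (⇑φ) d - 1))
      % Function.minimalPeriod (⇑φ) d] d = φ⁻¹ ((⇑φ)^[i] d) := by
    intro i
    rw [Function.iterate_mod_minimalPeriod_eq]
    apply φ.injective
    rw [Equiv.Perm.apply_inv_self]
    have hidx : (i + (Function.minimalPeriod (⇑φ) d - 1)).succ
        = i + Function.minimalPeriod (⇑φ) d := by omega
    rw [← Function.iterate_succ_apply' (⇑φ) (i + (Function.minimalPeriod (⇑φ) d - 1)) d,
      hidx, Function.iterate_add_apply, hmd]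
  have hpredA : ∀ i : ℕ, (fwd ((⇑φ)^[i] d) ∧ ¬ fwd ((⇑φ)^[(i + (Function.minimalPeriod (⇑φ) d - 1))
      % Function.minimalPeriod (⇑φ) d] d))
      ↔ (fwd ((⇑φ)^[i] d) ∧ fwd (ρ⁻¹ ((⇑φ)^[i] d))) := by
    intro i
    rw [hinviter i, hφinv, hfwd_rev, not_not]
  have hpredB : ∀ i : ℕ, (¬ fwd ((⇑φ)^[i] d) ∧ fwd ((⇑φ)^[(i + (Function.minimalPeriod (⇑φ) d - 1))
      % Function.minimalPeriod (⇑φ) d] d))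
      ↔ (¬ fwd ((⇑φ)^[i] d) ∧ ¬ fwd (ρ⁻¹ ((⇑φ)^[i] d))) := by
    intro i
    rw [hinviter i, hφinv, hfwd_rev]
  constructor
  · obtain ⟨e', hsc, hsrce⟩ := hsrc_ex d
    obtain ⟨j, hjlt, hj⟩ := hsc.exists_pow_eq'
    have hj' : (⇑φ)^[j % Function.minimalPeriod (⇑φ) d] d = e' := by
      rw [Function.iterate_mod_minimalPeriod_eq]
      exact hj
    refine ⟨e'.1.1, ⟨j % Function.minimalPeriod (⇑φ) d, Nat.mod_lt _ hmdpos,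
      by rw [hj'], ?_⟩, ?_⟩
    · exact (hpredA _).mpr (by rw [hj']; exact hsrce)
    · intro y hy
      obtain ⟨i, hilt, hiy, hcond⟩ := hy
      have hsrc2 := (hpredA i).mp hcond
      have heq := huniqA d ((⇑φ)^[i] d) e' (hscit i d) hsc hsrc2 hsrce
      rw [← hiy, heq]
  · obtain ⟨e', hsc, hsnke⟩ := hsnk_ex d
    obtain ⟨j, hjlt, hj⟩ := hsc.exists_pow_eq'
    have hj' : (⇑φ)^[j % Function.minimalPeriod (⇑φ) d] d = e' := by
      rw [Function.iterate_mod_minimalPeriod_eq]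
      exact hj
    refine ⟨e'.1.1, ⟨j % Function.minimalPeriod (⇑φ) d, Nat.mod_lt _ hmdpos,
      by rw [hj'], ?_⟩, ?_⟩
    · exact (hpredB _).mpr (by rw [hj']; exact hsnke)
    · intro y hy
      obtain ⟨i, hilt, hiy, hcond⟩ := hy
      have hsnk2 := (hpredB i).mp hcond
      have heq := huniqB d ((⇑φ)^[i] d) e' (hscit i d) hsc hsnk2 hsnke
      rw [← hiy, heq]
end

section
/- In a transversal structure on an internally 4-connected inner triangulation G of a 4-gon with outer vertices s, a, t, b in clockwise order, the red graph G_R = (V, E_R^+) is a bipolar orientation with source s and sink t, and the blue graph G_B = (V, E_B^+) is a bipolar orientation with source a and sink b. -/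
set_option maxHeartbeats 1000000

attribute [local instance] Classical.propDecidable

/-- The four categories of darts at a vertex in a transversal structure: the dart
`(u, v)` is red outgoing (`0`), blue outgoing (`1`), red incoming (`2`), or
blue incoming (`3`) according to the colored orientations `R`, `B`. -/
noncomputable def dartCat {V : Type*} (R B : V → V → Prop) (p : V × V) : Fin 4 :=
  if R p.1 p.2 then 0 else if B p.1 p.2 then 1 else if R p.2 p.1 then 2 else 3

namespace TSB

variable {V : Type*}

/-- Darts of a graph. -/
abbrev Dart (E : V → V → Prop) : Type _ := {p : V × V // E p.1 p.2}

/-- A combinatorial map context: rotation system, reversal, face permutation,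
connectivity and Euler's formula (genus 0). -/
structure MapCtx (V : Type*) [Fintype V] [DecidableEq V] (E : V → V → Prop) where
  hirr : ∀ v, ¬ E v v
  hsymmE : ∀ u v, E u v → E v u
  ρ : Equiv.Perm (Dart E)
  rv : Equiv.Perm (Dart E)
  φ : Equiv.Perm (Dart E)
  hρ_tail : ∀ d, (ρ d).1.1 = d.1.1
  hρ_cyclic : ∀ d d' : Dart E, d.1.1 = d'.1.1 → ∃ n : ℕ, (⇑ρ)^[n] d = d'
  hrev : ∀ d, (rv d).1 = (d.1.2, d.1.1)
  hφ : ∀ d, φ d = ρ (rv d)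
  hconn : ∀ u v : V, Relation.ReflTransGen E u v
  heuler : (Fintype.card V : ℤ) - Fintype.card (Dart E) / 2 + numOrbits φ = 2

variable [Fintype V] [DecidableEq V] {E : V → V → Prop}

namespace MapCtx

variable (M : MapCtx V E)

lemma tl_rv (d : Dart E) : (M.rv d).1.1 = d.1.2 := by rw [M.hrev]

lemma hd_rv (d : Dart E) : (M.rv d).1.2 = d.1.1 := by rw [M.hrev]

lemma rv_rv (d : Dart E) : M.rv (M.rv d) = d := by
  apply Subtype.ext
  rw [M.hrev, M.hrev]

lemma tl_φ (d : Dart E) : (M.φ d).1.1 = d.1.2 := by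
  rw [M.hφ, M.hρ_tail, M.tl_rv]

lemma ρ_eq_φ_rv (d : Dart E) : M.ρ d = M.φ (M.rv d) := by
  rw [M.hφ, M.rv_rv]

include M in
lemma dart_ne (d : Dart E) : d.1.1 ≠ d.1.2 := by
  intro h
  have hd := d.2
  rw [← h] at hd
  exact M.hirr d.1.1 hd

lemma rv_ne (d : Dart E) : M.rv d ≠ d := by
  intro h
  exact M.dart_ne d (by rw [← M.tl_rv d, h])

/-- A dart with given endpoints. -/
abbrev mkDart {u v : V} (h : E u v) : Dart E := ⟨(u, v), h⟩

lemma rv_mkDart {u v : V} (h : E u v) :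
    M.rv (mkDart h) = mkDart (M.hsymmE u v h) := by
  apply Subtype.ext
  rw [M.hrev]

/-- One reach step: apply `φ` or `rv`. -/
def RStep (d e : Dart E) : Prop := e = M.φ d ∨ e = M.rv d

/-- Connectivity of the dart set under `φ` and `rv`. -/
def Reach : Dart E → Dart E → Prop := Relation.ReflTransGen M.RStep

lemma reach_refl (d : Dart E) : M.Reach d d := Relation.ReflTransGen.refl

lemma reach_trans {d e f : Dart E} (h1 : M.Reach d e) (h2 : M.Reach e f) :
    M.Reach d f := Relation.ReflTransGen.trans h1 h2

lemma reach_φ (d : Dart E) : M.Reach d (M.φ d) :=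
  Relation.ReflTransGen.single (Or.inl rfl)

lemma reach_rv (d : Dart E) : M.Reach d (M.rv d) :=
  Relation.ReflTransGen.single (Or.inr rfl)

lemma reach_ρ (d : Dart E) : M.Reach d (M.ρ d) := by
  have h1 : M.Reach d (M.rv d) := M.reach_rv d
  have h2 : M.Reach (M.rv d) (M.φ (M.rv d)) := M.reach_φ _
  rw [← M.ρ_eq_φ_rv] at h2
  exact M.reach_trans h1 h2

lemma reach_iter {f : Dart E → Dart E} (hf : ∀ d, M.Reach d (f d)) (n : ℕ)
    (d : Dart E) : M.Reach d (f^[n] d) := by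
  induction n generalizing d with
  | zero => exact M.reach_refl d
  | succ n ih =>
    rw [Function.iterate_succ_apply]
    exact M.reach_trans (hf d) (ih (f d))

lemma reach_same_tail {d d' : Dart E} (h : d.1.1 = d'.1.1) : M.Reach d d' := by
  obtain ⟨n, hn⟩ := M.hρ_cyclic d d' h
  rw [← hn]
  exact M.reach_iter (fun e => M.reach_ρ e) n d

/-- every injective self-map of a finite type has iterates returning. -/
lemma exists_iterate_fixed {α : Type*} [Fintype α] (f : α → α)
    (hf : Function.Injective f) (d : α) : ∃ k, 0 < k ∧ f^[k] d = d := by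
  obtain ⟨i, j, hij, hfe⟩ := Fintype.exists_ne_map_eq_of_card_lt
    (fun n : Fin (Fintype.card α + 1) => f^[n.1] d) (by simp)
  rcases lt_or_gt_of_ne hij with h | h
  · refine ⟨j.1 - i.1, by omega, ?_⟩
    have : f^[i.1] (f^[j.1 - i.1] d) = f^[i.1] d := by
      rw [← Function.iterate_add_apply]
      have : i.1 + (j.1 - i.1) = j.1 := by omega
      rw [this, hfe]
    exact Function.Injective.iterate hf i.1 this
  · refine ⟨i.1 - j.1, by omega, ?_⟩
    have : f^[j.1] (f^[i.1 - j.1] d) = f^[j.1] d := by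
      rw [← Function.iterate_add_apply]
      have : j.1 + (i.1 - j.1) = i.1 := by omega
      rw [this, hfe]
    exact Function.Injective.iterate hf j.1 this

lemma reach_φ_back (d : Dart E) : M.Reach (M.φ d) d := by
  obtain ⟨k, hk, hfix⟩ := exists_iterate_fixed (⇑M.φ) M.φ.injective d
  have h1 : M.Reach (M.φ d) ((⇑M.φ)^[k - 1] (M.φ d)) :=
    M.reach_iter (fun e => M.reach_φ e) _ _
  have h2 : (⇑M.φ)^[k - 1] (M.φ d) = d := by
    have h3 := hfix
    rw [show k = (k-1)+1 by omega, Function.iterate_succ_apply] at h3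
    exact h3
  rwa [h2] at h1

lemma reach_symm {d e : Dart E} (h : M.Reach d e) : M.Reach e d := by
  induction h with
  | refl => exact M.reach_refl d
  | tail _ hstep ih =>
    rename_i c c' _
    refine M.reach_trans ?_ ih
    rcases hstep with h | h
    · rw [h]; exact M.reach_φ_back c
    · rw [h]
      have := M.reach_rv (M.rv c)
      rwa [M.rv_rv] at this

/-- The dart set is connected under `φ` and `rv`. -/
lemma reach_all (d d' : Dart E) : M.Reach d d' := by
  have key : ∀ v : V, Relation.ReflTransGen E d.1.1 v →
      ∀ e : Dart E, e.1.1 = v → M.Reach d e := by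
    intro v hv
    induction hv with
    | refl => intro e he; exact M.reach_same_tail he.symm
    | tail _ hstep ih =>
      rename_i u w _
      intro e he
      have hd : M.Reach d (mkDart hstep) := ih _ rfl
      have hr : M.Reach (mkDart hstep) (M.rv (mkDart hstep)) := M.reach_rv _
      have htl : (M.rv (mkDart hstep)).1.1 = w := M.tl_rv _
      exact M.reach_trans hd (M.reach_trans hr (M.reach_same_tail (by rw [htl, he])))
  exact key d'.1.1 (M.hconn _ _) d' rfl

end MapCtx

namespace MapCtx

section Comp

variable (M : MapCtx V E) (x : Dart E → Prop)

/-- One step of the dual-graph walk avoiding the edge set `x`: move along the face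
(`φ`) or cross an edge not in `x`. -/
def CStep (d e : Dart E) : Prop := e = M.φ d ∨ (¬ x d ∧ e = M.rv d)

/-- Connected components of the dual graph cut along `x`. -/
def comp : Dart E → Dart E → Prop := Relation.EqvGen (M.CStep x)

variable {M x}

lemma comp_refl (d : Dart E) : M.comp x d d := Relation.EqvGen.refl d

lemma comp_symm {d e : Dart E} (h : M.comp x d e) : M.comp x e d :=
  Relation.EqvGen.symm _ _ h

lemma comp_trans {d e f : Dart E} (h1 : M.comp x d e) (h2 : M.comp x e f) :
    M.comp x d f := Relation.EqvGen.trans _ _ _ h1 h2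

lemma comp_φ (d : Dart E) : M.comp x d (M.φ d) :=
  Relation.EqvGen.rel _ _ (Or.inl rfl)

lemma comp_φ_iter (n : ℕ) (d : Dart E) : M.comp x d ((⇑M.φ)^[n] d) := by
  induction n generalizing d with
  | zero => exact comp_refl d
  | succ n ih =>
    rw [Function.iterate_succ_apply]
    exact comp_trans (comp_φ d) (ih (M.φ d))

lemma comp_rv {d : Dart E} (h : ¬ x d) : M.comp x d (M.rv d) :=
  Relation.EqvGen.rel _ _ (Or.inr ⟨h, rfl⟩)

lemma comp_ρ {d : Dart E} (h : ¬ x d) : M.comp x d (M.ρ d) := by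
  have h2 := comp_φ (M := M) (x := x) (M.rv d)
  rw [← M.ρ_eq_φ_rv] at h2
  exact comp_trans (comp_rv h) h2

lemma comp_ρ_iter {d : Dart E} (n : ℕ) (h : ∀ k, k < n → ¬ x ((⇑M.ρ)^[k] d)) :
    M.comp x d ((⇑M.ρ)^[n] d) := by
  induction n with
  | zero => exact comp_refl d
  | succ n ih =>
    rw [Function.iterate_succ_apply']
    exact comp_trans (ih (fun k hk => h k (by omega)))
      (comp_ρ (h n (by omega)))

lemma comp_const {T : Dart E → ZMod 2} (hφT : ∀ d, T (M.φ d) = T d)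
    (hrvT : ∀ d, ¬ x d → T (M.rv d) = T d) {d e : Dart E}
    (h : M.comp x d e) : T d = T e := by
  induction h with
  | rel d e hde =>
    rcases hde with h | ⟨hxd, h⟩
    · rw [h, hφT]
    · rw [h, hrvT d hxd]
  | refl d => rfl
  | symm d e _ ih => exact ih.symm
  | trans d e f _ _ ih1 ih2 => exact ih1.trans ih2

lemma comp_or_x {d e : Dart E} (h : M.Reach d e) :
    M.comp x d e ∨ ∃ g, M.comp x d g ∧ x g := by
  induction h with
  | refl => exact Or.inl (comp_refl d)
  | tail _ hstep ih =>
    rename_i c c' _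
    rcases ih with ih | ih
    · rcases hstep with h | h
      · exact Or.inl (comp_trans ih (h ▸ comp_φ c))
      · by_cases hx : x c
        · exact Or.inr ⟨c, ih, hx⟩
        · exact Or.inl (comp_trans ih (h ▸ comp_rv hx))
    · exact Or.inr ih

lemma comp_congr {x y : Dart E → Prop} (hxy : ∀ d, x d ↔ y d) {d e : Dart E}
    (h : M.comp x d e) : M.comp y d e := by
  induction h with
  | rel d e hde =>
    rcases hde with h | ⟨hxd, h⟩
    · exact Relation.EqvGen.rel _ _ (Or.inl h)
    · exact Relation.EqvGen.rel _ _ (Or.inr ⟨fun hy => hxd ((hxy d).mpr hy), h⟩)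
  | refl d => exact comp_refl d
  | symm d e _ ih => exact comp_symm ih
  | trans d e f _ _ ih1 ih2 => exact comp_trans ih1 ih2

/-- Transfer of dual connectivity to a finer cut `y`, provided all `y`-edges lie
outside the `o`-component of the `x`-cut. -/
lemma comp_transfer {x y : Dart E → Prop} {o : Dart E}
    (hy : ∀ d, y d → ¬ M.comp x d o) {p q : Dart E} (h : M.comp x p q) :
    M.comp x p o → M.comp y p q := by
  induction h with
  | rel d e hde =>
    intro hdo
    rcases hde with h | ⟨_, h⟩
    · exact h ▸ comp_φ d
    · exact h ▸ comp_rv (fun hyd => hy d hyd hdo)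
  | refl d => exact fun _ => comp_refl d
  | symm d e hde ih =>
    intro heo
    exact comp_symm (ih (comp_trans hde heo))
  | trans d e f hde hef ih1 ih2 =>
    intro hdo
    exact comp_trans (ih1 hdo) (ih2 (comp_trans (comp_symm hde) hdo))

end Comp

/-- The main homological input (uses Euler's formula): any even, symmetric edge set
is a disjoint union of face boundaries; we only record the resulting `2`-coloring
of the faces. -/
theorem exists_face_T (M : MapCtx V E) (x : Dart E → Prop)
    (hxrev : ∀ d, x (M.rv d) ↔ x d)
    (hpar : ∀ v : V, ∑ d ∈ Finset.univ.filter (fun d : Dart E => d.1.1 = v),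
        (if x d then (1 : ZMod 2) else 0) = 0) :
    ∃ T : Dart E → ZMod 2, (∀ d, T (M.φ d) = T d) ∧
      ∀ d, T d + T (M.rv d) = if x d then 1 else 0 := by
  classical
  haveI : Fact (Nat.Prime 2) := ⟨Nat.prime_two⟩
  have hz2 : ∀ z : ZMod 2, z + z = 0 := fun z => CharTwo.add_self_eq_zero z
  by_cases hne : Nonempty (Dart E)
  swap
  · exact ⟨fun _ => 0, fun d => absurd ⟨d⟩ hne, fun d => absurd ⟨d⟩ hne⟩
  obtain ⟨dex⟩ := hne
  -- the edge setoid
  have pEquiv : Equivalence (fun d e : Dart E => e = d ∨ e = M.rv d) := by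
    constructor
    · intro d; exact Or.inl rfl
    · intro d e h
      rcases h with h | h
      · exact Or.inl h.symm
      · right; rw [h, M.rv_rv]
    · intro d e f h1 h2
      rcases h1 with h1 | h1 <;> rcases h2 with h2 | h2
      · exact Or.inl (h2.trans h1)
      · right; rw [h2, h1]
      · right; rw [h2, h1]
      · left; rw [h2, h1, M.rv_rv]
  let pSet : Setoid (Dart E) := ⟨fun d e => e = d ∨ e = M.rv d, pEquiv⟩
  -- the face setoid
  let fSet : Setoid (Dart E) := Setoid.mk M.φ.SameCycle
    ⟨fun _ => Equiv.Perm.SameCycle.refl M.φ _, Equiv.Perm.SameCycle.symm,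
      Equiv.Perm.SameCycle.trans⟩
  have hq : ∀ d, Quotient.mk fSet (M.φ d) = Quotient.mk fSet d := by
    intro d
    refine Quotient.sound ?_
    show M.φ.SameCycle (M.φ d) d
    exact ⟨-1, by simp⟩
  have hnum : numOrbits M.φ = Fintype.card (Quotient fSet) := by
    unfold numOrbits
    exact Fintype.card_congr (Equiv.refl _)
  -- the symmetric submodule
  let SymM : Submodule (ZMod 2) (Dart E → ZMod 2) :=
    { carrier := {y | ∀ d, y (M.rv d) = y d}
      add_mem' := by
        intro p q hp hq d
        simp only [Pi.add_apply, hp d, hq d]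
      zero_mem' := by intro d; rfl
      smul_mem' := by
        intro c y hy d
        simp only [Pi.smul_apply, hy d] }
  -- vertex boundary map
  let δ : (Dart E → ZMod 2) →ₗ[ZMod 2] (V → ZMod 2) :=
    { toFun := fun y v => ∑ d ∈ Finset.univ.filter (fun d : Dart E => d.1.1 = v), y d
      map_add' := by
        intro y z
        funext v
        simp [Finset.sum_add_distrib]
      map_smul' := by
        intro c y
        funext v
        simp [Finset.mul_sum] }
  let δS : SymM →ₗ[ZMod 2] (V → ZMod 2) := δ.comp SymM.subtype
  -- face boundary map
  have hFmSym : ∀ Tq : Quotient fSet → ZMod 2, (fun d : Dart E =>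
      Tq (Quotient.mk fSet d) + Tq (Quotient.mk fSet (M.rv d))) ∈ SymM := by
    intro Tq d
    show Tq (Quotient.mk fSet (M.rv d)) + Tq (Quotient.mk fSet (M.rv (M.rv d))) =
      Tq (Quotient.mk fSet d) + Tq (Quotient.mk fSet (M.rv d))
    rw [M.rv_rv]
    exact add_comm _ _
  let Fm : (Quotient fSet → ZMod 2) →ₗ[ZMod 2] SymM :=
    { toFun := fun Tq => ⟨fun d =>
        Tq (Quotient.mk fSet d) + Tq (Quotient.mk fSet (M.rv d)), hFmSym Tq⟩
      map_add' := by
        intro p q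
        apply Subtype.ext
        funext d
        show (p (Quotient.mk fSet d) + q (Quotient.mk fSet d)) +
            (p (Quotient.mk fSet (M.rv d)) + q (Quotient.mk fSet (M.rv d))) =
          (p (Quotient.mk fSet d) + p (Quotient.mk fSet (M.rv d))) +
            (q (Quotient.mk fSet d) + q (Quotient.mk fSet (M.rv d)))
        ring
      map_smul' := by
        intro c y
        apply Subtype.ext
        funext d
        show c * y (Quotient.mk fSet d) + c * y (Quotient.mk fSet (M.rv d)) =
          c * (y (Quotient.mk fSet d) + y (Quotient.mk fSet (M.rv d)))
        ring }
  -- Fm lands in ker δS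
  have hFm_ker : ∀ Tq, Fm Tq ∈ LinearMap.ker δS := by
    intro Tq
    rw [LinearMap.mem_ker]
    funext v
    show (∑ d ∈ Finset.univ.filter (fun d : Dart E => d.1.1 = v),
      (Tq (Quotient.mk fSet d) + Tq (Quotient.mk fSet (M.rv d)))) = 0
    rw [Finset.sum_add_distrib]
    have hswap : (∑ d ∈ Finset.univ.filter (fun d : Dart E => d.1.1 = v),
        Tq (Quotient.mk fSet (M.rv d))) =
        ∑ d ∈ Finset.univ.filter (fun d : Dart E => d.1.1 = v),
        Tq (Quotient.mk fSet d) := by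
      have hptw : ∀ d : Dart E, Tq (Quotient.mk fSet (M.rv d)) =
          Tq (Quotient.mk fSet (M.ρ d)) := by
        intro d
        rw [M.ρ_eq_φ_rv, hq]
      rw [Finset.sum_congr rfl (fun d _ => hptw d)]
      refine Finset.sum_nbij' (fun d => M.ρ d) (fun d => M.ρ.symm d) ?_ ?_ ?_ ?_ ?_
      · intro d hd
        simp only [Finset.mem_filter, Finset.mem_univ, true_and] at hd ⊢
        rw [M.hρ_tail]; exact hd
      · intro d hd
        simp only [Finset.mem_filter, Finset.mem_univ, true_and] at hd ⊢
        have := M.hρ_tail (M.ρ.symm d)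
        rw [Equiv.apply_symm_apply] at this
        rw [← this]; exact hd
      · intro d _; exact Equiv.symm_apply_apply _ _
      · intro d _; exact Equiv.apply_symm_apply _ _
      · intro d _; rfl
    rw [hswap]
    exact hz2 _
  -- kernel of Fm is the constants
  have hker_Fm : ∀ Tq, Fm Tq = 0 → ∀ q q' : Quotient fSet, Tq q = Tq q' := by
    intro Tq hTq
    have hzero : ∀ d : Dart E,
        Tq (Quotient.mk fSet d) + Tq (Quotient.mk fSet (M.rv d)) = 0 :=
      fun d => congrFun (congrArg Subtype.val hTq) d
    have hrvinv : ∀ d : Dart E,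
        Tq (Quotient.mk fSet (M.rv d)) = Tq (Quotient.mk fSet d) := by
      intro d
      have h := hzero d
      have h2 := hz2 (Tq (Quotient.mk fSet d))
      calc Tq (Quotient.mk fSet (M.rv d))
          = Tq (Quotient.mk fSet d) + (Tq (Quotient.mk fSet d) +
            Tq (Quotient.mk fSet (M.rv d))) := by rw [← add_assoc, h2, zero_add]
        _ = Tq (Quotient.mk fSet d) := by rw [h, add_zero]
    have hreach : ∀ d e : Dart E, M.Reach d e →
        Tq (Quotient.mk fSet d) = Tq (Quotient.mk fSet e) := by
      intro d e h
      induction h with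
      | refl => rfl
      | tail _ hstep ih =>
        rename_i c c' _
        rcases hstep with h | h
        · rw [ih, h, hq]
        · rw [ih, h, hrvinv]
    intro q q'
    induction q using Quotient.ind with
    | _ d =>
    induction q' using Quotient.ind with
    | _ e =>
    exact hreach d e (M.reach_all d e)
  -- counting darts: |D| = 2 |EQ|
  have hcardD : Fintype.card (Dart E) = 2 * Fintype.card (Quotient pSet) := by
    have h1 : (Finset.univ : Finset (Dart E)).card =
        ∑ q ∈ (Finset.univ : Finset (Quotient pSet)),
        (Finset.univ.filter (fun d : Dart E => Quotient.mk pSet d = q)).card :=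
      Finset.card_eq_sum_card_fiberwise (fun d _ => Finset.mem_univ _)
    have hfib : ∀ q : Quotient pSet,
        (Finset.univ.filter (fun d : Dart E => Quotient.mk pSet d = q)).card = 2 := by
      intro q
      induction q using Quotient.ind with
      | _ d =>
      have hset : Finset.univ.filter
          (fun e : Dart E => Quotient.mk pSet e = Quotient.mk pSet d) =
          {d, M.rv d} := by
        ext e
        simp only [Finset.mem_filter, Finset.mem_univ, true_and,
          Finset.mem_insert, Finset.mem_singleton]
        rw [Quotient.eq]
        show (d = e ∨ d = M.rv e) ↔ _
        constructor
        · intro h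
          rcases h with h | h
          · exact Or.inl h.symm
          · right; rw [h, M.rv_rv]
        · intro h
          rcases h with h | h
          · exact Or.inl h.symm
          · right; rw [h, M.rv_rv]
      rw [hset, Finset.card_insert_of_notMem (by
        simp only [Finset.mem_singleton]
        exact fun h => M.rv_ne d h.symm), Finset.card_singleton]
    rw [Finset.card_univ] at h1
    rw [h1, Finset.sum_congr rfl (fun q _ => hfib q), Finset.sum_const,
      Finset.card_univ, smul_eq_mul, Nat.mul_comm]
  -- dim SymM = |EQ|
  have hresp : ∀ (y : Quotient pSet → ZMod 2) (d e : Dart E),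
      (fun d e : Dart E => e = d ∨ e = M.rv d) d e →
      True := fun _ _ _ _ => trivial
  let toSym : (Quotient pSet → ZMod 2) →ₗ[ZMod 2] (Dart E → ZMod 2) :=
    { toFun := fun y d => y (Quotient.mk pSet d)
      map_add' := fun _ _ => rfl
      map_smul' := fun _ _ => rfl }
  have htoSym_inj : Function.Injective toSym := by
    intro y z h
    funext q
    induction q using Quotient.ind with
    | _ d => exact congrFun h d
  have htoSym_range : LinearMap.range toSym = SymM := by
    apply le_antisymm
    · rintro y ⟨z, rfl⟩
      intro d
      show z (Quotient.mk pSet (M.rv d)) = z (Quotient.mk pSet d)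
      congr 1
      refine Quotient.sound ?_
      show d = M.rv d ∨ d = M.rv (M.rv d)
      right; rw [M.rv_rv]
    · intro y hy
      refine ⟨Quotient.lift y ?_, ?_⟩
      · intro p r hpr
        rcases hpr with h | h
        · rw [h]
        · rw [h]; exact (hy p).symm
      · funext d; rfl
  have hdimSym : Module.finrank (ZMod 2) SymM = Fintype.card (Quotient pSet) := by
    rw [← htoSym_range, LinearMap.finrank_range_of_inj htoSym_inj,
      Module.finrank_fintype_fun_eq_card]
  -- single-dart indicator boundary
  have hδ_single : ∀ A : Dart E,
      δ (fun d => if d = A then (1 : ZMod 2) else 0) =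
      fun v => if v = A.1.1 then 1 else 0 := by
    intro A
    funext v
    show (∑ d ∈ Finset.univ.filter (fun d : Dart E => d.1.1 = v),
      if d = A then (1 : ZMod 2) else 0) = _
    by_cases hv : A.1.1 = v
    · rw [Finset.sum_eq_single_of_mem A
        (Finset.mem_filter.mpr ⟨Finset.mem_univ _, hv⟩)
        (fun b _ hb => if_neg hb), if_pos rfl, if_pos hv.symm]
    · rw [Finset.sum_eq_zero, if_neg (fun h => hv h.symm)]
      intro d hd
      rcases Finset.mem_filter.mp hd with ⟨_, hdv⟩
      refine if_neg ?_
      intro h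
      rw [h] at hdv
      exact hv hdv
  -- connectivity: χ_u + χ_v₀ is a boundary of a symmetric vector
  have hconn_im : ∀ u : V, ∃ y : Dart E → ZMod 2, y ∈ SymM ∧
      δ y = fun v => (if v = u then (1 : ZMod 2) else 0) +
        (if v = dex.1.1 then 1 else 0) := by
    intro u
    have hpath := M.hconn dex.1.1 u
    induction hpath with
    | refl =>
      refine ⟨0, Submodule.zero_mem _, ?_⟩
      rw [map_zero]
      funext v
      rw [Pi.zero_apply, hz2]
    | @tail w u' hwalk hstep ih =>
      obtain ⟨y, hySym, hyδ⟩ := ih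
      have hy2Sym : (fun d => (if d = (⟨(_, _), hstep⟩ : Dart E) then (1 : ZMod 2)
          else 0) + (if d = M.rv ⟨(_, _), hstep⟩ then 1 else 0)) ∈ SymM := by
        intro d
        show (if M.rv d = (⟨(_, _), hstep⟩ : Dart E) then (1 : ZMod 2) else 0) +
            (if M.rv d = M.rv ⟨(_, _), hstep⟩ then 1 else 0) =
          (if d = (⟨(_, _), hstep⟩ : Dart E) then (1 : ZMod 2) else 0) +
            (if d = M.rv ⟨(_, _), hstep⟩ then 1 else 0)
        have h1 : (M.rv d = (⟨(_, _), hstep⟩ : Dart E)) ↔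
            (d = M.rv ⟨(_, _), hstep⟩) := by
          constructor
          · intro h; rw [← h, M.rv_rv]
          · intro h; rw [h, M.rv_rv]
        have h2 : (M.rv d = M.rv (⟨(_, _), hstep⟩ : Dart E)) ↔
            (d = ⟨(_, _), hstep⟩) := by
          constructor
          · intro h
            have h3 := congrArg (⇑M.rv) h
            rwa [M.rv_rv, M.rv_rv] at h3
          · intro h; rw [h]
        rw [if_congr h1 rfl rfl, if_congr h2 rfl rfl]
        exact add_comm _ _
      refine ⟨y + _, Submodule.add_mem _ hySym hy2Sym, ?_⟩
      rw [map_add, hyδ]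
      have hδy2 : δ (fun d => (if d = (⟨(_, _), hstep⟩ : Dart E) then (1 : ZMod 2)
          else 0) + (if d = M.rv ⟨(_, _), hstep⟩ then 1 else 0)) =
          fun v => (if v = w then (1 : ZMod 2) else 0) +
          (if v = u' then 1 else 0) := by
        have hcalc : (fun d => (if d = (⟨(_, _), hstep⟩ : Dart E) then (1 : ZMod 2)
            else 0) + (if d = M.rv ⟨(_, _), hstep⟩ then 1 else 0)) =
            (fun d => if d = (⟨(_, _), hstep⟩ : Dart E) then (1 : ZMod 2) else 0) +
            (fun d => if d = M.rv ⟨(_, _), hstep⟩ then 1 else 0) := rfl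
        rw [hcalc, map_add, hδ_single, hδ_single]
        have htlA : ((⟨(_, _), hstep⟩ : Dart E)).1.1 = w := rfl
        have htlrvA : (M.rv (⟨(_, _), hstep⟩ : Dart E)).1.1 = u' :=
          M.tl_rv ⟨(_, _), hstep⟩
        rw [htlA, htlrvA]
        rfl
      rw [hδy2]
      funext v
      show ((if v = w then (1:ZMod 2) else 0) + (if v = dex.1.1 then 1 else 0)) +
        ((if v = w then (1:ZMod 2) else 0) + (if v = u' then 1 else 0)) = _
      have key : ∀ p r z : ZMod 2, (p + r) + (p + z) = z + r := by
        intro p r z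
        calc (p + r) + (p + z) = (p + p) + (z + r) := by ring
          _ = z + r := by rw [hz2, zero_add]
      rw [key]
  -- rank of δS is at least |V| - 1
  haveI : FiniteDimensional (ZMod 2) (Dart E → ZMod 2) := by infer_instance
  have hrank1 : Fintype.card V ≤
      Module.finrank (ZMod 2) (LinearMap.range δS) + 1 := by
    set π : (V → ZMod 2) →ₗ[ZMod 2] ({v : V // v ≠ dex.1.1} → ZMod 2) :=
      LinearMap.funLeft (ZMod 2) (ZMod 2) (fun u => u.1) with hπ
    have hbas : ∀ u' : {v : V // v ≠ dex.1.1},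
        (fun w' : {v : V // v ≠ dex.1.1} =>
          if u' = w' then (1 : ZMod 2) else 0) ∈ LinearMap.range (π.comp δS) := by
      intro u'
      obtain ⟨y, hySym, hyδ⟩ := hconn_im u'.1
      refine ⟨⟨y, hySym⟩, ?_⟩
      show π (δ y) = _
      rw [hyδ]
      funext w'
      show (if w'.1 = u'.1 then (1 : ZMod 2) else 0) +
        (if w'.1 = dex.1.1 then 1 else 0) = _
      rw [if_neg w'.2, add_zero]
      by_cases h : w'.1 = u'.1
      · rw [if_pos h, if_pos (Subtype.ext h.symm)]
      · rw [if_neg h, if_neg (fun h2 => h (congrArg Subtype.val h2.symm))]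
    have hsurj : LinearMap.range (π.comp δS) = ⊤ := by
      rw [eq_top_iff]
      intro g _
      rw [pi_eq_sum_univ g]
      exact Submodule.sum_mem _ (fun u' _ => Submodule.smul_mem _ _ (hbas u'))
    have h1 : Module.finrank (ZMod 2) ({v : V // v ≠ dex.1.1} → ZMod 2) =
        Fintype.card V - 1 := by
      rw [Module.finrank_fintype_fun_eq_card]
      have := Fintype.card_subtype_compl (fun v : V => v = dex.1.1)
      rw [Fintype.card_subtype_eq] at this
      exact this
    have h2 : LinearMap.range (π.comp δS) = Submodule.map π (LinearMap.range δS) :=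
      LinearMap.range_comp _ _
    have h3 : Module.finrank (ZMod 2) (Submodule.map π (LinearMap.range δS)) ≤
        Module.finrank (ZMod 2) (LinearMap.range δS) :=
      Submodule.finrank_map_le π (LinearMap.range δS)
    have h4 : Module.finrank (ZMod 2)
        ({v : V // v ≠ dex.1.1} → ZMod 2) ≤
        Module.finrank (ZMod 2) (LinearMap.range δS) := by
      calc Module.finrank (ZMod 2) ({v : V // v ≠ dex.1.1} → ZMod 2)
          = Module.finrank (ZMod 2)
            (⊤ : Submodule (ZMod 2) ({v : V // v ≠ dex.1.1} → ZMod 2)) :=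
            (finrank_top _ _).symm
        _ = Module.finrank (ZMod 2) (LinearMap.range (π.comp δS)) := by rw [hsurj]
        _ = Module.finrank (ZMod 2) (Submodule.map π (LinearMap.range δS)) := by
            rw [h2]
        _ ≤ _ := h3
    rw [h1] at h4
    have hV1 : 1 ≤ Fintype.card V := Fintype.card_pos_iff.mpr ⟨dex.1.1⟩
    omega
  -- rank-nullity
  have hrn := LinearMap.finrank_range_add_finrank_ker δS
  rw [hdimSym] at hrn
  have hrnF := LinearMap.finrank_range_add_finrank_ker Fm
  rw [Module.finrank_fintype_fun_eq_card] at hrnF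
  -- kernel of Fm has dimension at most 1
  have hkerF_le : Module.finrank (ZMod 2) (LinearMap.ker Fm) ≤ 1 := by
    have hle : LinearMap.ker Fm ≤
        Submodule.span (ZMod 2) {(fun _ => 1 : Quotient fSet → ZMod 2)} := by
      intro Tq hTq
      rw [LinearMap.mem_ker] at hTq
      have hconst := hker_Fm Tq hTq
      have : Tq = Tq (Quotient.mk fSet dex) •
          (fun _ => 1 : Quotient fSet → ZMod 2) := by
        funext q
        show Tq q = Tq (Quotient.mk fSet dex) * 1
        rw [mul_one]
        exact hconst q _
      rw [this]
      exact Submodule.smul_mem _ _ (Submodule.mem_span_singleton_self _)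
    calc Module.finrank (ZMod 2) (LinearMap.ker Fm)
        ≤ Module.finrank (ZMod 2) (Submodule.span (ZMod 2)
          {(fun _ => 1 : Quotient fSet → ZMod 2)}) :=
          Submodule.finrank_mono hle
      _ ≤ 1 := by
          have hone : (fun _ => 1 : Quotient fSet → ZMod 2) ≠ 0 := by
            intro h
            have := congrFun h (Quotient.mk fSet dex)
            exact one_ne_zero this
          rw [finrank_span_singleton hone]
  -- Euler's relation in ℕ
  have heulerN : Fintype.card V + Fintype.card (Quotient fSet) =
      Fintype.card (Quotient pSet) + 2 := by
    have h := M.heuler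
    rw [hnum] at h
    rw [hcardD] at h
    have h2 : ((2 * Fintype.card (Quotient pSet) : ℕ) : ℤ) / 2 =
        (Fintype.card (Quotient pSet) : ℤ) := by
      push_cast
      omega
    rw [h2] at h
    omega
  -- range Fm = ker δS
  have hrange_le : LinearMap.range Fm ≤ LinearMap.ker δS := by
    rintro y ⟨Tq, rfl⟩
    exact hFm_ker Tq
  have hFQ1 : 1 ≤ Fintype.card (Quotient fSet) :=
    Fintype.card_pos_iff.mpr ⟨Quotient.mk fSet dex⟩
  have hdims : Module.finrank (ZMod 2) (LinearMap.ker δS) ≤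
      Module.finrank (ZMod 2) (LinearMap.range Fm) := by
    omega
  have hrange_eq : LinearMap.range Fm = LinearMap.ker δS :=
    Submodule.eq_of_le_of_finrank_le hrange_le hdims
  -- the cycle vector lies in ker δS
  have hxvSym : (fun d : Dart E => if x d then (1 : ZMod 2) else 0) ∈ SymM := by
    intro d
    show (if x (M.rv d) then (1 : ZMod 2) else 0) = (if x d then (1 : ZMod 2) else 0)
    by_cases h : x d
    · rw [if_pos ((hxrev d).mpr h), if_pos h]
    · rw [if_neg (fun h2 => h ((hxrev d).mp h2)), if_neg h]
  have hxv_ker : (⟨fun d : Dart E => if x d then (1 : ZMod 2) else 0, hxvSym⟩ :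
      SymM) ∈ LinearMap.ker δS := by
    rw [LinearMap.mem_ker]
    funext v
    exact hpar v
  rw [← hrange_eq] at hxv_ker
  obtain ⟨Tq, hTq⟩ := hxv_ker
  refine ⟨fun d => Tq (Quotient.mk fSet d), fun d => by
    show Tq (Quotient.mk fSet (M.φ d)) = Tq (Quotient.mk fSet d)
    rw [hq], ?_⟩
  intro d
  exact congrFun (congrArg Subtype.val hTq) d

end MapCtx

/-- A directed cycle (with periodic indexing) in the relation `S`. -/
structure Cyc (S : V → V → Prop) where
  n : ℕ
  c : ℕ → V
  hpos : 0 < n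
  hper : ∀ i, c (i + n) = c i
  hinj : ∀ i, i < n → ∀ j, j < n → c i = c j → i = j
  hS : ∀ i, S (c i) (c (i + 1))

namespace Cyc

variable {S : V → V → Prop} (cy : Cyc S)

omit [Fintype V] [DecidableEq V]

lemma c_add_mul (i q : ℕ) : cy.c (i + q * cy.n) = cy.c i := by
  induction q with
  | zero => simp
  | succ q ih =>
    have : i + (q + 1) * cy.n = (i + q * cy.n) + cy.n := by ring
    rw [this, cy.hper, ih]

lemma c_mod (i : ℕ) : cy.c i = cy.c (i % cy.n) := by
  conv_lhs => rw [← Nat.mod_add_div i cy.n]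
  rw [Nat.mul_comm]
  exact cy.c_add_mul _ _

lemma c_congr {i j : ℕ} (h : i % cy.n = j % cy.n) : cy.c i = cy.c j := by
  rw [cy.c_mod i, cy.c_mod j, h]

lemma c_inj_mod {i j : ℕ} (h : cy.c i = cy.c j) : i % cy.n = j % cy.n := by
  refine cy.hinj _ (Nat.mod_lt _ cy.hpos) _ (Nat.mod_lt _ cy.hpos) ?_
  rw [← cy.c_mod, ← cy.c_mod]
  exact h

/-- The (symmetric) edge set of a cycle, as a predicate on darts. -/
def cx (cy : Cyc S) {E : V → V → Prop} (d : Dart E) : Prop :=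
  ∃ i, (d.1.1 = cy.c i ∧ d.1.2 = cy.c (i + 1)) ∨
    (d.1.2 = cy.c i ∧ d.1.1 = cy.c (i + 1))

lemma cx_norm {E : V → V → Prop} (d : Dart E) (h : cy.cx d) :
    ∃ r, r < cy.n ∧ ((d.1.1 = cy.c r ∧ d.1.2 = cy.c (r + 1)) ∨
      (d.1.2 = cy.c r ∧ d.1.1 = cy.c (r + 1))) := by
  obtain ⟨i, hi⟩ := h
  refine ⟨i % cy.n, Nat.mod_lt _ cy.hpos, ?_⟩
  have h1 : cy.c i = cy.c (i % cy.n) := cy.c_mod i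
  have h2 : cy.c (i + 1) = cy.c (i % cy.n + 1) :=
    cy.c_congr (((Nat.mod_modEq i cy.n).add_right 1).symm)
  rcases hi with ⟨ha, hb⟩ | ⟨ha, hb⟩
  · exact Or.inl ⟨h1 ▸ ha, h2 ▸ hb⟩
  · exact Or.inr ⟨h1 ▸ ha, h2 ▸ hb⟩

/-- Weaken the relation of a cycle. -/
def mono {S' : V → V → Prop} (h : ∀ u v, S u v → S' u v) : Cyc S' :=
  ⟨cy.n, cy.c, cy.hpos, cy.hper, cy.hinj, fun i => h _ _ (cy.hS i)⟩

lemma cx_mono {S' : V → V → Prop} (h : ∀ u v, S u v → S' u v)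
    {E : V → V → Prop} (d : Dart E) : (cy.mono h).cx d ↔ cy.cx d := Iff.rfl

/-- Reverse a cycle. -/
def rev (cy : Cyc S) : Cyc (fun u v => S v u) where
  n := cy.n
  c := fun i => cy.c (cy.n - 1 - i % cy.n)
  hpos := cy.hpos
  hper := by intro i; simp [Nat.add_mod_right]
  hinj := by
    intro i hi j hj hc
    have h1 : i % cy.n = i := Nat.mod_eq_of_lt hi
    have h2 : j % cy.n = j := Nat.mod_eq_of_lt hj
    rw [h1, h2] at hc
    have := cy.hinj _ (by omega) _ (by omega) hc
    omega
  hS := by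
    intro i
    have hrlt : i % cy.n < cy.n := Nat.mod_lt _ cy.hpos
    have hi1 : (i + 1) % cy.n = (i % cy.n + 1) % cy.n :=
      ((Nat.mod_modEq i cy.n).add_right 1).symm
    by_cases hc : i % cy.n + 1 < cy.n
    · have h2 : (i + 1) % cy.n = i % cy.n + 1 := by
        rw [hi1]; exact Nat.mod_eq_of_lt hc
      show S (cy.c (cy.n - 1 - (i + 1) % cy.n)) (cy.c (cy.n - 1 - i % cy.n))
      rw [h2]
      have hs := cy.hS (cy.n - 2 - i % cy.n)
      have he : cy.n - 2 - i % cy.n + 1 = cy.n - 1 - i % cy.n := by omega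
      rw [he] at hs
      have he2 : cy.n - 1 - (i % cy.n + 1) = cy.n - 2 - i % cy.n := by omega
      rw [he2]
      exact hs
    · have hrn : i % cy.n = cy.n - 1 := by omega
      have h2 : (i + 1) % cy.n = 0 := by
        rw [hi1, hrn, show cy.n - 1 + 1 = cy.n by omega, Nat.mod_self]
      show S (cy.c (cy.n - 1 - (i + 1) % cy.n)) (cy.c (cy.n - 1 - i % cy.n))
      rw [h2, hrn, Nat.sub_zero, Nat.sub_self]
      have hs := cy.hS (cy.n - 1)
      rw [show cy.n - 1 + 1 = cy.n by omega] at hs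
      have h0 : cy.c cy.n = cy.c 0 := by
        have := cy.hper 0
        simpa using this
      rw [h0] at hs
      exact hs

lemma rev_c (m : ℕ) : (cy.rev).c m = cy.c (cy.n - 1 - m % cy.n) := rfl

lemma rev_n : (cy.rev).n = cy.n := rfl

lemma cx_rev {E : V → V → Prop} (d : Dart E) : (cy.rev).cx d ↔ cy.cx d := by
  have hn0 : cy.c cy.n = cy.c 0 := by have := cy.hper 0; simpa using this
  constructor
  · intro h
    obtain ⟨r, hr, hd⟩ := (cy.rev).cx_norm d h
    rw [cy.rev_n] at hr
    have h1 : (cy.rev).c r = cy.c (cy.n - 1 - r) := by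
      rw [cy.rev_c, Nat.mod_eq_of_lt hr]
    by_cases hc : r + 1 < cy.n
    · have h2 : (cy.rev).c (r + 1) = cy.c (cy.n - 2 - r) := by
        rw [cy.rev_c, Nat.mod_eq_of_lt hc]
        congr 1
        omega
      have he : cy.n - 2 - r + 1 = cy.n - 1 - r := by omega
      rw [h1, h2] at hd
      rcases hd with ⟨ha, hb⟩ | ⟨ha, hb⟩
      · exact ⟨cy.n - 2 - r, Or.inr ⟨hb, by rw [he]; exact ha⟩⟩
      · exact ⟨cy.n - 2 - r, Or.inl ⟨hb, by rw [he]; exact ha⟩⟩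
    · have hrn : r = cy.n - 1 := by omega
      have h2 : (cy.rev).c (r + 1) = cy.c (cy.n - 1) := by
        rw [cy.rev_c, hrn, show cy.n - 1 + 1 = cy.n by omega, Nat.mod_self, Nat.sub_zero]
      have h1' : (cy.rev).c r = cy.c 0 := by rw [h1, hrn, Nat.sub_self]
      have he : cy.n - 1 + 1 = cy.n := by omega
      rw [h1', h2] at hd
      rcases hd with ⟨ha, hb⟩ | ⟨ha, hb⟩
      · exact ⟨cy.n - 1, Or.inr ⟨hb, by rw [he, hn0]; exact ha⟩⟩
      · exact ⟨cy.n - 1, Or.inl ⟨hb, by rw [he, hn0]; exact ha⟩⟩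
  · intro h
    obtain ⟨r, hr, hd⟩ := cy.cx_norm d h
    by_cases hc : r + 1 < cy.n
    · have h1 : (cy.rev).c (cy.n - 2 - r) = cy.c (r + 1) := by
        rw [cy.rev_c, Nat.mod_eq_of_lt (by omega)]
        congr 1
        omega
      have h2 : (cy.rev).c (cy.n - 2 - r + 1) = cy.c r := by
        rw [cy.rev_c, Nat.mod_eq_of_lt (by omega)]
        congr 1
        omega
      rcases hd with ⟨ha, hb⟩ | ⟨ha, hb⟩
      · exact ⟨cy.n - 2 - r, Or.inr ⟨by rw [h1]; exact hb, by rw [h2]; exact ha⟩⟩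
      · exact ⟨cy.n - 2 - r, Or.inl ⟨by rw [h1]; exact hb, by rw [h2]; exact ha⟩⟩
    · have hrn : r = cy.n - 1 := by omega
      have h1 : (cy.rev).c (cy.n - 1) = cy.c 0 := by
        rw [cy.rev_c, Nat.mod_eq_of_lt (by omega), Nat.sub_self]
      have h2 : (cy.rev).c (cy.n - 1 + 1) = cy.c (cy.n - 1) := by
        rw [cy.rev_c, show cy.n - 1 + 1 = cy.n by omega, Nat.mod_self, Nat.sub_zero]
      have he : r + 1 = cy.n := by omega
      rcases hd with ⟨ha, hb⟩ | ⟨ha, hb⟩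
      · refine ⟨cy.n - 1, Or.inr ⟨?_, ?_⟩⟩
        · rw [h1, ← hn0, ← he]; exact hb
        · rw [h2, ← hrn]; exact ha
      · refine ⟨cy.n - 1, Or.inl ⟨?_, ?_⟩⟩
        · rw [h1, ← hn0, ← he]; exact hb
        · rw [h2, ← hrn]; exact ha

end Cyc

section Walks

variable {S : V → V → Prop}

omit [Fintype V] [DecidableEq V] in
lemma cyc_of_walk :
    ∀ k, 0 < k → ∀ f : ℕ → V, (∀ m, m < k → S (f m) (f (m + 1))) → f k = f 0 →
      Nonempty (Cyc S) := by
  intro k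
  induction k using Nat.strong_induction_on with
  | _ k IH =>
  intro hk f hf hclose
  by_cases hrep : ∃ p q, p < q ∧ q ≤ k ∧ ¬(p = 0 ∧ q = k) ∧ f p = f q
  · obtain ⟨p, q, hpq, hqk, hne, hfeq⟩ := hrep
    have hδpos : 0 < q - p := by omega
    have hk'pos : 0 < k - (q - p) := by
      rcases Nat.eq_zero_or_pos (k - (q - p)) with h | h
      · exfalso
        have hp : p = 0 := by omega
        have hq : q = k := by omega
        exact hne ⟨hp, hq⟩
      · exact h
    have hk'lt : k - (q - p) < k := by omega
    refine IH (k - (q - p)) hk'lt hk'pos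
      (fun m => if m < p then f m else f (m + (q - p))) ?_ ?_
    · intro m hm
      by_cases h1 : m + 1 < p
      · have h0 : m < p := by omega
        simp only [if_pos h0, if_pos h1]
        exact hf m (by omega)
      · by_cases h0 : m < p
        · have hp1 : m + 1 = p := by omega
          simp only [if_pos h0, if_neg h1]
          have hq2 : f (m + 1 + (q - p)) = f (m + 1) := by
            rw [hp1, show p + (q - p) = q by omega]
            exact hfeq.symm
          rw [hq2]
          exact hf m (by omega)
        · simp only [if_neg h0, if_neg (show ¬ m + 1 < p by omega)]
          rw [show m + 1 + (q - p) = m + (q - p) + 1 by omega]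
          exact hf (m + (q - p)) (by omega)
    · have h1 : ¬ k - (q - p) < p := by omega
      simp only [if_neg h1]
      by_cases h0 : 0 < p
      · simp only [if_pos h0]
        rw [show k - (q - p) + (q - p) = k by omega, hclose]
      · have hp0 : p = 0 := by omega
        simp only [if_neg (show ¬ (0:ℕ) < p by omega)]
        rw [show k - (q - p) + (q - p) = k by omega, hclose,
          show (0:ℕ) + (q - p) = q by omega, ← hfeq, hp0]
  · refine ⟨⟨k, fun m => f (m % k), hk, ?_, ?_, ?_⟩⟩
    · intro i; simp [Nat.add_mod_right]
    · intro i hi j hj hij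
      simp only [Nat.mod_eq_of_lt hi, Nat.mod_eq_of_lt hj] at hij
      by_contra hne
      rcases Nat.lt_or_ge i j with h | h
      · exact hrep ⟨i, j, h, by omega, by rintro ⟨h1, h2⟩; omega, hij⟩
      · exact hrep ⟨j, i, by omega, by omega, by rintro ⟨h1, h2⟩; omega, hij.symm⟩
    · intro i
      have hrlt : i % k < k := Nat.mod_lt _ hk
      have hi1 : (i + 1) % k = (i % k + 1) % k :=
        ((Nat.mod_modEq i k).add_right 1).symm
      by_cases hc : i % k + 1 < k
      · have h2 : (i + 1) % k = i % k + 1 := by rw [hi1]; exact Nat.mod_eq_of_lt hc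
        show S (f (i % k)) (f ((i + 1) % k))
        rw [h2]
        exact hf _ (by omega)
      · have h2 : (i + 1) % k = 0 := by
          rw [hi1, show i % k + 1 = k by omega, Nat.mod_self]
        show S (f (i % k)) (f ((i + 1) % k))
        rw [h2, ← hclose, show i % k = k - 1 by omega]
        have := hf (k - 1) (by omega)
        rwa [show k - 1 + 1 = k by omega] at this

omit [Fintype V] [DecidableEq V] in
lemma transGen_walk {v w : V} (h : Relation.TransGen S v w) :
    ∃ (k : ℕ) (f : ℕ → V), 0 < k ∧ f 0 = v ∧ f k = w ∧
      ∀ m, m < k → S (f m) (f (m + 1)) := by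
  induction h with
  | single hstep =>
    rename_i w'
    refine ⟨1, fun m => if m = 0 then v else w', Nat.one_pos, by simp, by simp, ?_⟩
    intro m hm
    have hm0 : m = 0 := by omega
    subst hm0
    simpa using hstep
  | tail hvw hstep ih =>
    rename_i b c
    obtain ⟨k, f, hk, hf0, hfk, hsteps⟩ := ih
    refine ⟨k + 1, fun m => if m ≤ k then f m else c, by omega, ?_, ?_, ?_⟩
    · simp only [if_pos (Nat.zero_le k)]; exact hf0
    · simp only [if_neg (show ¬ k + 1 ≤ k by omega)]
    · intro m hm
      by_cases h1 : m < k
      · simp only [if_pos (show m ≤ k by omega), if_pos (show m + 1 ≤ k by omega)]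
        exact hsteps m h1
      · have hmk : m = k := by omega
        simp only [if_pos (show m ≤ k by omega), if_neg (show ¬ m + 1 ≤ k by omega)]
        rw [hmk, hfk]
        exact hstep

omit [Fintype V] [DecidableEq V] in
lemma transGen_cyc {v : V} (h : Relation.TransGen S v v) : Nonempty (Cyc S) := by
  obtain ⟨k, f, hk, hf0, hfk, hsteps⟩ := transGen_walk h
  exact cyc_of_walk k hk f hsteps (by rw [hfk, hf0])

lemma walk_cyc (g : ℕ → V) (hg : ∀ j, S (g j) (g (j + 1))) : Nonempty (Cyc S) := by
  obtain ⟨i, j, hij, hfe⟩ := Fintype.exists_ne_map_eq_of_card_lt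
    (fun m : Fin (Fintype.card V + 1) => g m.1) (by simp)
  rcases Nat.lt_or_ge i.1 j.1 with h | h
  · have hfe' : g i.1 = g j.1 := hfe
    exact cyc_of_walk (j.1 - i.1) (by omega) (fun m => g (i.1 + m))
      (fun m _ => by rw [show i.1 + (m+1) = i.1 + m + 1 by omega]; exact hg _)
      (by
          rw [show i.1 + (j.1 - i.1) = j.1 by omega]
          simp only [Nat.add_zero]
          exact hfe'.symm)
  · have h' : j.1 < i.1 := by
      rcases Nat.lt_or_ge j.1 i.1 with h2 | h2
      · exact h2
      · exact absurd (Fin.ext (by omega)) hij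
    have hfe' : g i.1 = g j.1 := hfe
    exact cyc_of_walk (i.1 - j.1) (by omega) (fun m => g (j.1 + m))
      (fun m _ => by rw [show j.1 + (m+1) = j.1 + m + 1 by omega]; exact hg _)
      (by
          rw [show j.1 + (i.1 - j.1) = i.1 by omega]
          simp only [Nat.add_zero]
          exact hfe')

end Walks

section Fin4

omit [Fintype V] [DecidableEq V] in
lemma fin4_pass {m : ℕ} (P : ℕ → Fin 4)
    (hstep : ∀ k, k < m → P (k + 1) = P k ∨ P (k + 1) = P k + 1)
    (u : Fin 4) (h0 : P 0 = u) (hm : P m ≠ u) (hm1 : P m ≠ u + 1) :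
    ∃ k, 0 < k ∧ k < m ∧ P k = u + 1 := by
  classical
  have hex : ∃ k, P k ≠ u := ⟨m, hm⟩
  have hk₀ : P (Nat.find hex) ≠ u := Nat.find_spec hex
  have hmin : ∀ j, j < Nat.find hex → P j = u := fun j hj =>
    not_not.mp (Nat.find_min hex hj)
  have hk₀le : Nat.find hex ≤ m := Nat.find_min' hex hm
  have hk₀pos : 0 < Nat.find hex := by
    rcases Nat.eq_zero_or_pos (Nat.find hex) with h | h
    · exact absurd (h ▸ h0) hk₀
    · exact h
  have hprev : P (Nat.find hex - 1) = u := hmin _ (by omega)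
  have hstep' := hstep (Nat.find hex - 1) (by omega)
  rw [show Nat.find hex - 1 + 1 = Nat.find hex by omega, hprev] at hstep'
  have hval : P (Nat.find hex) = u + 1 := by
    rcases hstep' with h | h
    · exact absurd h hk₀
    · exact h
  have hlt : Nat.find hex < m := by
    rcases eq_or_lt_of_le hk₀le with h | h
    · exact absurd (h ▸ hval) hm1
    · exact h
  exact ⟨Nat.find hex, hk₀pos, hlt, hval⟩

omit [Fintype V] [DecidableEq V] in
lemma exists_min_iter {α : Type*} (f : α → α) {d e : α} (h : ∃ k, f^[k] d = e)
    (hne : d ≠ e) :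
    ∃ m, 0 < m ∧ f^[m] d = e ∧
      ∀ j, 0 < j → j < m → f^[j] d ≠ e ∧ f^[j] d ≠ d := by
  classical
  have hm : f^[Nat.find h] d = e := Nat.find_spec h
  have hmin : ∀ j, j < Nat.find h → f^[j] d ≠ e := fun j hj => Nat.find_min h hj
  have hpos : 0 < Nat.find h := by
    rcases Nat.eq_zero_or_pos (Nat.find h) with h2 | h2
    · rw [h2] at hm
      exact absurd hm hne
    · exact h2
  refine ⟨Nat.find h, hpos, hm, fun j hj0 hjm => ⟨hmin j hjm, ?_⟩⟩
  intro hfix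
  have h2 : f^[Nat.find h - j] d = e := by
    have h3 := hm
    rw [show Nat.find h = (Nat.find h - j) + j by omega,
      Function.iterate_add_apply, hfix] at h3
    exact h3
  exact hmin (Nat.find h - j) (by omega) h2

end Fin4

/-- The set of outer edges of the 4-gon. -/
def outS (s a t b : V) : Set (Set V) := {{s,a},{a,t},{t,b},{b,s}}

omit [Fintype V] [DecidableEq V] in
lemma outS_rot (s a t b : V) : outS a t b s = outS s a t b := by
  unfold outS
  ext z
  simp only [Set.mem_insert_iff, Set.mem_singleton_iff]
  tauto

omit [Fintype V] [DecidableEq V] in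
lemma quad_rot (s a t b : V) : ({a, t, b, s} : Set V) = {s, a, t, b} := by
  ext z
  simp only [Set.mem_insert_iff, Set.mem_singleton_iff]
  tauto

omit [Fintype V] [DecidableEq V] in
lemma pair_notmem {u w : V} {Z : Set (Set V)} (h : ({u, w} : Set V) ∉ Z) :
    ({w, u} : Set V) ∉ Z := by
  rwa [Set.pair_comm w u]

omit [Fintype V] [DecidableEq V] in
lemma mem_of_pair_eq {u w p q : V} (h : ({u, w} : Set V) = {p, q}) :
    u = p ∨ u = q := by
  have h2 : u ∈ ({p, q} : Set V) := h ▸ Set.mem_insert u {w}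
  simpa using h2

omit [Fintype V] [DecidableEq V] in
lemma innerPair {s a t b u w : V} (hu : u ∉ ({s, a, t, b} : Set V)) :
    ({u, w} : Set V) ∉ outS s a t b := by
  intro h
  apply hu
  simp only [outS, Set.mem_insert_iff, Set.mem_singleton_iff] at h
  simp only [Set.mem_insert_iff, Set.mem_singleton_iff]
  rcases h with h | h | h | h
  · rcases mem_of_pair_eq h with h | h
    · exact Or.inl h
    · exact Or.inr (Or.inl h)
  · rcases mem_of_pair_eq h with h | h
    · exact Or.inr (Or.inl h)
    · exact Or.inr (Or.inr (Or.inl h))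
  · rcases mem_of_pair_eq h with h | h
    · exact Or.inr (Or.inr (Or.inl h))
    · exact Or.inr (Or.inr (Or.inr h))
  · rcases mem_of_pair_eq h with h | h
    · exact Or.inr (Or.inr (Or.inr h))
    · exact Or.inl h

/-- The full transversal-structure context. -/
structure TCtx (V : Type*) [Fintype V] [DecidableEq V] (E : V → V → Prop)
    extends MapCtx V E where
  s : V
  a : V
  t : V
  b : V
  d₀ : Dart E
  R : V → V → Prop
  B : V → V → Prop
  hnodup : s ≠ a ∧ s ≠ t ∧ s ≠ b ∧ a ≠ t ∧ a ≠ b ∧ t ≠ b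
  houter4 : Function.minimalPeriod (⇑φ) d₀ = 4
  houter_s : d₀.1.1 = s
  houter_a : (φ d₀).1.1 = a
  houter_t : ((⇑φ)^[2] d₀).1.1 = t
  houter_b : ((⇑φ)^[3] d₀).1.1 = b
  hRE : ∀ u v, R u v → E u v
  hBE : ∀ u v, B u v → E u v
  hRinner : ∀ u v, R u v → ({u, v} : Set V) ∉ outS s a t b
  hBinner : ∀ u v, B u v → ({u, v} : Set V) ∉ outS s a t b
  hexactly : ∀ u v, E u v → ({u, v} : Set V) ∉ outS s a t b →
    (R u v ∨ R v u ∨ B u v ∨ B v u) ∧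
    (R u v → ¬ R v u ∧ ¬ B u v ∧ ¬ B v u) ∧
    (R v u → ¬ B u v ∧ ¬ B v u) ∧ (B u v → ¬ B v u)
  hcs : ∀ v, E s v → ({s, v} : Set V) ∉ outS s a t b → R s v
  hca : ∀ v, E a v → ({a, v} : Set V) ∉ outS s a t b → B a v
  hct : ∀ v, E t v → ({t, v} : Set V) ∉ outS s a t b → R v t
  hcb : ∀ v, E b v → ({b, v} : Set V) ∉ outS s a t b → B v b
  hblocks : ∀ v : V, v ∉ ({s, a, t, b} : Set V) →
    (∀ e : Dart E, e.1.1 = v →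
      dartCat R B (ρ e).1 = dartCat R B e.1 ∨
      dartCat R B (ρ e).1 = dartCat R B e.1 + 1) ∧
    (∀ c : Fin 4, ∃ e : Dart E, e.1.1 = v ∧ dartCat R B e.1 = c)

namespace TCtx

variable (T : TCtx V E)

lemma R_asym {u w : V} (h : T.R u w) : ¬ T.R w u :=
  ((T.hexactly u w (T.hRE u w h) (T.hRinner u w h)).2.1 h).1

lemma R_not_B {u w : V} (h : T.R u w) : ¬ T.B u w ∧ ¬ T.B w u :=
  ((T.hexactly u w (T.hRE u w h) (T.hRinner u w h)).2.1 h).2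

lemma B_asym {u w : V} (h : T.B u w) : ¬ T.B w u :=
  (T.hexactly u w (T.hBE u w h) (T.hBinner u w h)).2.2.2 h

lemma B_not_R {u w : V} (h : T.B u w) : ¬ T.R u w ∧ ¬ T.R w u :=
  ⟨fun hr => (T.R_not_B hr).1 h, fun hr => (T.R_not_B hr).2 h⟩

lemma cat_of_R {u w : V} (h : T.R u w) : dartCat T.R T.B (u, w) = 0 := by
  simp [dartCat, h]

lemma cat_of_B {u w : V} (h : T.B u w) : dartCat T.R T.B (u, w) = 1 := by
  simp [dartCat, (T.B_not_R h).1, h]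

lemma cat_of_Rrev {u w : V} (h : T.R w u) : dartCat T.R T.B (u, w) = 2 := by
  simp [dartCat, T.R_asym h, (T.R_not_B h).2, h]

lemma cat_of_Brev {u w : V} (h : T.B w u) : dartCat T.R T.B (u, w) = 3 := by
  simp [dartCat, (T.B_not_R h).2, T.B_asym h, (T.B_not_R h).1]

lemma cat0_decode {u w : V} (h : dartCat T.R T.B (u, w) = 0) : T.R u w := by
  unfold dartCat at h
  split_ifs at h with h1 h2 h3
  · exact h1
  · exact absurd h (by decide)
  · exact absurd h (by decide)
  · exact absurd h (by decide)

lemma cat1_decode {u w : V} (h : dartCat T.R T.B (u, w) = 1) : T.B u w := by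
  unfold dartCat at h
  split_ifs at h with h1 h2 h3
  · exact absurd h (by decide)
  · exact h2
  · exact absurd h (by decide)
  · exact absurd h (by decide)

lemma cat2_decode {u w : V} (h : dartCat T.R T.B (u, w) = 2) : T.R w u := by
  unfold dartCat at h
  split_ifs at h with h1 h2 h3
  · exact absurd h (by decide)
  · exact absurd h (by decide)
  · exact h3
  · exact absurd h (by decide)

lemma cat3_decode {u w : V} (hE : E u w)
    (hin : ({u, w} : Set V) ∉ outS T.s T.a T.t T.b)
    (h : dartCat T.R T.B (u, w) = 3) : T.B w u := by
  rcases (T.hexactly u w hE hin).1 with h1 | h1 | h1 | h1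
  · rw [T.cat_of_R h1] at h
    exact absurd h (by decide)
  · rw [T.cat_of_Rrev h1] at h
    exact absurd h (by decide)
  · rw [T.cat_of_B h1] at h
    exact absurd h (by decide)
  · exact h1

lemma dartCat_swap {u w : V} (hE : E u w)
    (hin : ({u, w} : Set V) ∉ outS T.s T.a T.t T.b) :
    dartCat T.B (fun p q => T.R q p) (u, w) = dartCat T.R T.B (u, w) + 3 := by
  rcases (T.hexactly u w hE hin).1 with h | h | h | h
  · rw [T.cat_of_R h]
    simp only [dartCat, if_neg (T.R_not_B h).1, if_neg (T.R_asym h),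
      if_neg (T.R_not_B h).2]
    decide
  · rw [T.cat_of_Rrev h]
    simp only [dartCat, if_neg (T.R_not_B h).2, if_pos h]
    decide
  · rw [T.cat_of_B h]
    simp only [dartCat, if_pos h]
    decide
  · rw [T.cat_of_Brev h]
    simp only [dartCat, if_neg (T.B_asym h), if_neg (T.B_not_R h).1, if_pos h]
    decide

lemma iter_shift (k : ℕ) : (⇑T.φ)^[k] (T.φ T.d₀) = (⇑T.φ)^[k + 1] T.d₀ :=
  (Function.iterate_succ_apply (⇑T.φ) k T.d₀).symm

lemma four_periodic : (⇑T.φ)^[4] T.d₀ = T.d₀ := by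
  have h := Function.iterate_minimalPeriod (f := ⇑T.φ) (x := T.d₀)
  rwa [T.houter4] at h

/-- The color-swapped transversal structure (blue becomes red). -/
noncomputable def swap (T : TCtx V E) : TCtx V E where
  toMapCtx := T.toMapCtx
  s := T.a
  a := T.t
  t := T.b
  b := T.s
  d₀ := T.φ T.d₀
  R := T.B
  B := fun u v => T.R v u
  hnodup := by
    obtain ⟨h1, h2, h3, h4, h5, h6⟩ := T.hnodup
    exact ⟨h4, h5, Ne.symm h1, h6, Ne.symm h2, Ne.symm h3⟩
  houter4 := by
    rw [Function.minimalPeriod_apply, T.houter4]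
    exact ⟨4, by omega, T.four_periodic⟩
  houter_s := T.houter_a
  houter_a := by
    have h := T.houter_t
    rw [show ((⇑T.φ)^[2] T.d₀) = T.φ (T.φ T.d₀) by
      rw [← T.iter_shift 1, Function.iterate_one]] at h
    exact h
  houter_t := by
    have h := T.houter_b
    rw [← T.iter_shift 2] at h
    exact h
  houter_b := by
    rw [T.iter_shift 3, T.four_periodic]
    exact T.houter_s
  hRE := T.hBE
  hBE := fun u v h => T.hsymmE v u (T.hRE v u h)
  hRinner := by
    intro u v h
    rw [outS_rot]
    exact T.hBinner u v h
  hBinner := by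
    intro u v h
    rw [outS_rot, Set.pair_comm]
    exact T.hRinner v u h
  hexactly := by
    intro u v hE hin
    rw [outS_rot] at hin
    have h := T.hexactly u v hE hin
    obtain ⟨h1, h2, h3, h4⟩ := h
    refine ⟨by tauto, ?_, ?_, ?_⟩
    · intro hBuv
      exact ⟨h4 hBuv, fun hRvu => (h3 hRvu).1 hBuv, fun hRuv => (h2 hRuv).2.1 hBuv⟩
    · intro hBvu
      exact ⟨fun hRvu => (h3 hRvu).2 hBvu, fun hRuv => (h2 hRuv).2.2 hBvu⟩
    · intro hRvu hRuv
      exact (h2 hRuv).1 hRvu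
  hcs := by
    intro v hE hin
    rw [outS_rot] at hin
    exact T.hca v hE hin
  hca := by
    intro v hE hin
    rw [outS_rot] at hin
    exact T.hct v hE hin
  hct := by
    intro v hE hin
    rw [outS_rot] at hin
    exact T.hcb v hE hin
  hcb := by
    intro v hE hin
    rw [outS_rot] at hin
    exact T.hcs v hE hin
  hblocks := by
    intro v hv
    rw [quad_rot] at hv
    obtain ⟨hstep, hex⟩ := T.hblocks v hv
    constructor
    · intro e he
      have he2 : (T.ρ e).1.1 = v := by rw [T.hρ_tail]; exact he
      have hc1 : dartCat T.B (fun p q => T.R q p) e.1 =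
          dartCat T.R T.B e.1 + 3 :=
        T.dartCat_swap e.2 (innerPair (he ▸ hv))
      have hc2 : dartCat T.B (fun p q => T.R q p) (T.ρ e).1 =
          dartCat T.R T.B (T.ρ e).1 + 3 :=
        T.dartCat_swap (T.ρ e).2 (innerPair (he2 ▸ hv))
      rcases hstep e he with h | h
      · left
        rw [hc1, hc2, h]
      · right
        rw [hc1, hc2, h, add_right_comm]
    · intro c
      obtain ⟨e, he, hcat⟩ := hex (c + 1)
      refine ⟨e, he, ?_⟩
      have hc1 : dartCat T.B (fun p q => T.R q p) e.1 =
          dartCat T.R T.B e.1 + 3 :=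
        T.dartCat_swap e.2 (innerPair (he ▸ hv))
      rw [hc1, hcat, add_assoc, show (1 : Fin 4) + 3 = 0 by decide, add_zero]

lemma swap_R : T.swap.R = T.B := rfl

lemma swap_B : T.swap.B = fun u v => T.R v u := rfl

lemma swap_map : T.swap.toMapCtx = T.toMapCtx := rfl

lemma swap_d₀ : T.swap.d₀ = T.φ T.d₀ := rfl

end TCtx

namespace MapCtx

variable (M : MapCtx V E)

lemma tl_ρ_iter (k : ℕ) (d : Dart E) : ((⇑M.ρ)^[k] d).1.1 = d.1.1 := by
  induction k with
  | zero => rfl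
  | succ k ih =>
    rw [Function.iterate_succ_apply']
    rw [M.hρ_tail]
    exact ih

/-- The arc of the rotation at a vertex from `A` to `Bd`, when `A`, `Bd` are the
only `x`-darts at the vertex: all strictly intermediate darts avoid `x` and are
dual-connected to `Bd`. -/
lemma arc (x : Dart E → Prop) {A Bd : Dart E} (htl : A.1.1 = Bd.1.1) (hAB : A ≠ Bd)
    (honly : ∀ g : Dart E, g.1.1 = A.1.1 → x g → g = A ∨ g = Bd) :
    ∃ m, 0 < m ∧ (⇑M.ρ)^[m] A = Bd ∧
      (∀ k, 0 < k → k < m → ¬ x ((⇑M.ρ)^[k] A)) ∧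
      (∀ k, 1 ≤ k → k ≤ m → M.comp x ((⇑M.ρ)^[k] A) Bd) := by
  obtain ⟨m, hm0, hmeq, hmin⟩ := exists_min_iter (⇑M.ρ) (M.hρ_cyclic A Bd htl) hAB
  have hnx : ∀ k, 0 < k → k < m → ¬ x ((⇑M.ρ)^[k] A) := by
    intro k hk0 hkm hx
    rcases honly _ (M.tl_ρ_iter k A) hx with h | h
    · exact (hmin k hk0 hkm).2 h
    · exact (hmin k hk0 hkm).1 h
  refine ⟨m, hm0, hmeq, hnx, ?_⟩
  have harc : ∀ r k, r = m - k → 1 ≤ k → k ≤ m →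
      M.comp x ((⇑M.ρ)^[k] A) Bd := by
    intro r
    induction r with
    | zero =>
      intro k h0 h1 h2
      have hkm : k = m := by omega
      rw [hkm, hmeq]
      exact comp_refl _
    | succ r ih =>
      intro k h0 h1 h2
      have hklt : k < m := by omega
      have hstep : M.comp x ((⇑M.ρ)^[k] A) ((⇑M.ρ)^[k + 1] A) := by
        rw [Function.iterate_succ_apply']
        exact comp_ρ (hnx k h1 hklt)
      exact comp_trans hstep (ih (k + 1) (by omega) (by omega) (by omega))
  exact fun k => harc (m - k) k rfl

/-- All darts at an `x`-free vertex are in one dual component. -/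
lemma vertex_comp (x : Dart E → Prop) {g g' : Dart E} (htl : g.1.1 = g'.1.1)
    (hnx : ∀ e : Dart E, e.1.1 = g.1.1 → ¬ x e) : M.comp x g g' := by
  obtain ⟨n, hn⟩ := M.hρ_cyclic g g' htl
  rw [← hn]
  exact comp_ρ_iter n (fun k _ => hnx _ (M.tl_ρ_iter k g))

end MapCtx

namespace TCtx

variable (T : TCtx V E) {S : V → V → Prop}

/-- The `i`-th dart of a red cycle. -/
def cd (cy : Cyc T.R) (i : ℕ) : Dart E :=
  ⟨(cy.c i, cy.c (i + 1)), T.hRE _ _ (cy.hS i)⟩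

lemma cd_tl (cy : Cyc T.R) (i : ℕ) : (T.cd cy i).1.1 = cy.c i := rfl

lemma cd_hd (cy : Cyc T.R) (i : ℕ) : (T.cd cy i).1.2 = cy.c (i + 1) := rfl

lemma rv_cd_tl (cy : Cyc T.R) (i : ℕ) : (T.rv (T.cd cy i)).1.1 = cy.c (i + 1) :=
  T.tl_rv _

lemma rv_cd_hd (cy : Cyc T.R) (i : ℕ) : (T.rv (T.cd cy i)).1.2 = cy.c i :=
  T.hd_rv _

/-- Vertices of a red cycle are inner vertices. -/
lemma avoid (cy : Cyc T.R) (i : ℕ) :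
    cy.c i ∉ ({T.s, T.a, T.t, T.b} : Set V) := by
  intro hmem
  have hER := cy.hS (i + cy.n - 1)
  have he : i + cy.n - 1 + 1 = i + cy.n := by have := cy.hpos; omega
  rw [he, cy.hper] at hER
  have hout := cy.hS i
  simp only [Set.mem_insert_iff, Set.mem_singleton_iff] at hmem
  rcases hmem with h | h | h | h
  · rw [h] at hER
    have hin : ({T.s, cy.c (i + cy.n - 1)} : Set V) ∉ outS T.s T.a T.t T.b := by
      rw [Set.pair_comm]
      exact T.hRinner _ _ hER
    have hsu := T.hcs _ (T.hsymmE _ _ (T.hRE _ _ hER)) hin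
    exact T.R_asym hsu hER
  · rw [h] at hER
    have hin : ({T.a, cy.c (i + cy.n - 1)} : Set V) ∉ outS T.s T.a T.t T.b := by
      rw [Set.pair_comm]
      exact T.hRinner _ _ hER
    have hau := T.hca _ (T.hsymmE _ _ (T.hRE _ _ hER)) hin
    exact (T.B_not_R hau).2 hER
  · rw [h] at hout
    have hin : ({T.t, cy.c (i + 1)} : Set V) ∉ outS T.s T.a T.t T.b :=
      T.hRinner _ _ hout
    have htu := T.hct _ (T.hRE _ _ hout) hin
    exact T.R_asym htu hout
  · rw [h] at hER
    have hin : ({T.b, cy.c (i + cy.n - 1)} : Set V) ∉ outS T.s T.a T.t T.b := by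
      rw [Set.pair_comm]
      exact T.hRinner _ _ hER
    have hub := T.hcb _ (T.hsymmE _ _ (T.hRE _ _ hER)) hin
    exact (T.R_not_B hER).1 hub

lemma n3 (cy : Cyc T.R) : 3 ≤ cy.n := by
  by_contra h
  push_neg at h
  have h0 := cy.hS 0
  have hp := cy.hpos
  rcases (by omega : cy.n = 1 ∨ cy.n = 2) with h1 | h1
  · have hc : cy.c 1 = cy.c 0 := by
      have := cy.hper 0
      rw [h1] at this
      simpa using this
    rw [hc] at h0
    exact T.hirr _ (T.hRE _ _ h0)
  · have h1' := cy.hS 1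
    have hc : cy.c 2 = cy.c 0 := by
      have := cy.hper 0
      rw [h1] at this
      simpa using this
    rw [hc] at h1'
    exact T.R_asym h0 h1'

lemma cx_rv_iff (cy : Cyc T.R) (d : Dart E) : cy.cx (T.rv d) ↔ cy.cx d := by
  constructor
  · rintro ⟨i, hi⟩
    rw [T.tl_rv, T.hd_rv] at hi
    rcases hi with ⟨h1, h2⟩ | ⟨h1, h2⟩
    · exact ⟨i, Or.inr ⟨h1, h2⟩⟩
    · exact ⟨i, Or.inl ⟨h1, h2⟩⟩
  · rintro ⟨i, hi⟩
    refine ⟨i, ?_⟩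
    rw [T.tl_rv, T.hd_rv]
    rcases hi with ⟨h1, h2⟩ | ⟨h1, h2⟩
    · exact Or.inr ⟨h1, h2⟩
    · exact Or.inl ⟨h1, h2⟩

lemma cx_cd (cy : Cyc T.R) (i : ℕ) : cy.cx (T.cd cy i) := ⟨i, Or.inl ⟨rfl, rfl⟩⟩

lemma c_ne_c2 (cy : Cyc T.R) (i : ℕ) : cy.c i ≠ cy.c (i + 2) := by
  intro h
  have hmod : i ≡ i + 2 [MOD cy.n] := cy.c_inj_mod h
  have hdvd : cy.n ∣ i + 2 - i := (Nat.modEq_iff_dvd' (by omega)).mp hmod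
  have h2 : cy.n ∣ 2 := by simpa using hdvd
  have h3 := Nat.le_of_dvd (by omega) h2
  have h4 := T.n3 cy
  omega

lemma cd_ne (cy : Cyc T.R) (i : ℕ) : T.rv (T.cd cy i) ≠ T.cd cy (i + 1) := by
  intro h
  have h2 : (T.rv (T.cd cy i)).1.2 = (T.cd cy (i + 1)).1.2 := by rw [h]
  rw [T.rv_cd_hd, T.cd_hd] at h2
  exact T.c_ne_c2 cy i h2

lemma cx_at_vertex (cy : Cyc T.R) {d : Dart E} (i : ℕ)
    (htl : d.1.1 = cy.c (i + 1)) (hx : cy.cx d) :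
    d = T.rv (T.cd cy i) ∨ d = T.cd cy (i + 1) := by
  obtain ⟨j, hj⟩ := hx
  rcases hj with ⟨h1, h2⟩ | ⟨h1, h2⟩
  · right
    have hmod : j % cy.n = (i + 1) % cy.n := cy.c_inj_mod (by rw [← h1, htl])
    have hd2 : d.1.2 = cy.c (i + 2) := by
      rw [h2]
      exact cy.c_congr ((Nat.ModEq.add_right 1 hmod : _))
    apply Subtype.ext
    apply Prod.ext_iff.mpr
    exact ⟨htl, hd2⟩
  · left
    have hmod : (j + 1) % cy.n = (i + 1) % cy.n := cy.c_inj_mod (by rw [← h2, htl])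
    have hmod' : j % cy.n = i % cy.n := Nat.ModEq.add_right_cancel' 1 hmod
    have hd2 : d.1.2 = cy.c i := by
      rw [h1]
      exact cy.c_congr hmod'
    apply Subtype.ext
    apply Prod.ext_iff.mpr
    constructor
    · rw [htl, T.rv_cd_tl]
    · rw [hd2, T.rv_cd_hd]

lemma vertex_form (cy : Cyc T.R) (j : ℕ) : ∃ i, cy.c j = cy.c (i + 1) := by
  refine ⟨j + cy.n - 1, cy.c_congr ?_⟩
  have h1 : j + cy.n - 1 + 1 = j + cy.n := by have := cy.hpos; omega
  rw [h1]
  exact (Nat.add_mod_right j cy.n).symm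

lemma cx_tail_vertex (cy : Cyc T.R) {d : Dart E} (hx : cy.cx d) :
    ∃ i, d.1.1 = cy.c (i + 1) := by
  obtain ⟨j, hj⟩ := hx
  rcases hj with ⟨h1, _⟩ | ⟨_, h2⟩
  · obtain ⟨i, hi⟩ := T.vertex_form cy j
    exact ⟨i, by rw [h1, hi]⟩
  · exact ⟨j, h2⟩

lemma cx_parity (cy : Cyc T.R) (v : V) :
    ∑ d ∈ Finset.univ.filter (fun d : Dart E => d.1.1 = v),
      (if cy.cx d then (1 : ZMod 2) else 0) = 0 := by
  by_cases hv : ∃ i, v = cy.c (i + 1)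
  · obtain ⟨i, hi⟩ := hv
    have hset : Finset.univ.filter (fun d : Dart E => d.1.1 = v ∧ cy.cx d) =
        {T.rv (T.cd cy i), T.cd cy (i + 1)} := by
      ext d
      simp only [Finset.mem_filter, Finset.mem_univ, true_and,
        Finset.mem_insert, Finset.mem_singleton]
      constructor
      · rintro ⟨htl, hx⟩
        exact T.cx_at_vertex cy i (by rw [htl, hi]) hx
      · intro h
        rcases h with h | h
        · rw [h]
          exact ⟨by rw [T.rv_cd_tl, hi], (T.cx_rv_iff cy _).mpr (T.cx_cd cy i)⟩
        · rw [h]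
          exact ⟨by rw [T.cd_tl, hi], T.cx_cd cy (i + 1)⟩
    have h1 : ∑ d ∈ Finset.univ.filter (fun d : Dart E => d.1.1 = v),
        (if cy.cx d then (1 : ZMod 2) else 0) =
        ∑ d ∈ Finset.univ.filter (fun d : Dart E => d.1.1 = v ∧ cy.cx d),
        (1 : ZMod 2) := by
      rw [Finset.sum_filter, Finset.sum_filter]
      apply Finset.sum_congr rfl
      intro d _
      by_cases hc1 : d.1.1 = v <;> by_cases hc2 : cy.cx d <;> simp [hc1, hc2]
    rw [h1, hset, Finset.sum_pair (T.cd_ne cy i)]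
    exact CharTwo.add_self_eq_zero _
  · apply Finset.sum_eq_zero
    intro d hd
    rw [if_neg]
    intro hx
    obtain ⟨i, hiv⟩ := T.cx_tail_vertex cy hx
    rcases Finset.mem_filter.mp hd with ⟨_, htl⟩
    exact hv ⟨i, by rw [← htl, hiv]⟩

lemma cx_red (cy : Cyc T.R) {d : Dart E} (h : cy.cx d) :
    T.R d.1.1 d.1.2 ∨ T.R d.1.2 d.1.1 := by
  obtain ⟨j, hj⟩ := h
  rcases hj with ⟨h1, h2⟩ | ⟨h1, h2⟩
  · left; rw [h1, h2]; exact cy.hS j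
  · right; rw [h1, h2]; exact cy.hS j

lemma blue_not_cx (cy : Cyc T.R) {d : Dart E}
    (hB : T.B d.1.1 d.1.2 ∨ T.B d.1.2 d.1.1) : ¬ cy.cx d := by
  intro h
  rcases T.cx_red cy h with hr | hr <;> rcases hB with hb | hb
  · exact (T.R_not_B hr).1 hb
  · exact (T.R_not_B hr).2 hb
  · exact (T.R_not_B hr).2 hb
  · exact (T.R_not_B hr).1 hb

end TCtx

namespace TCtx

open MapCtx

/-- **Key descent step**: inside the region of a red cycle there is a blue cycle
with strictly smaller region. -/
theorem key (T : TCtx V E) (cy : Cyc T.R) :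
    ∃ cy' : Cyc T.B,
      {d : Dart E | ¬ T.toMapCtx.comp (fun e => cy'.cx e) d T.d₀} ⊂
      {d : Dart E | ¬ T.toMapCtx.comp (fun e => cy.cx e) d T.d₀} := by
  classical
  set M := T.toMapCtx with hMdef
  set x : Dart E → Prop := fun e => cy.cx e with hxdef
  have hxrev : ∀ d, x (M.rv d) ↔ x d := fun d => T.cx_rv_iff cy d
  obtain ⟨Tc, hTφ, hTrv⟩ := M.exists_face_T x hxrev (fun v => T.cx_parity cy v)
  -- arcs at the cycle vertices
  have harcA : ∀ i, ∃ m, 0 < m ∧ (⇑M.ρ)^[m] (M.rv (T.cd cy i)) = T.cd cy (i+1) ∧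
      (∀ k, 0 < k → k < m → ¬ x ((⇑M.ρ)^[k] (M.rv (T.cd cy i)))) ∧
      (∀ k, 1 ≤ k → k ≤ m →
        M.comp x ((⇑M.ρ)^[k] (M.rv (T.cd cy i))) (T.cd cy (i+1))) := by
    intro i
    apply M.arc x (by rw [T.rv_cd_tl, T.cd_tl]) (T.cd_ne cy i)
    intro g htl hxg
    exact T.cx_at_vertex cy i (by rw [htl, T.rv_cd_tl]) hxg
  have harcB : ∀ i, ∃ m, 0 < m ∧ (⇑M.ρ)^[m] (T.cd cy (i+1)) = M.rv (T.cd cy i) ∧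
      (∀ k, 0 < k → k < m → ¬ x ((⇑M.ρ)^[k] (T.cd cy (i+1)))) ∧
      (∀ k, 1 ≤ k → k ≤ m →
        M.comp x ((⇑M.ρ)^[k] (T.cd cy (i+1))) (M.rv (T.cd cy i))) := by
    intro i
    apply M.arc x (by rw [T.rv_cd_tl, T.cd_tl]) (Ne.symm (T.cd_ne cy i))
    intro g htl hxg
    rcases T.cx_at_vertex cy i (by rw [htl, T.cd_tl]) hxg with h | h
    · exact Or.inr h
    · exact Or.inl h
  -- chains along the cycle
  have hchain : ∀ i, M.comp x (T.cd cy i) (T.cd cy (i+1)) := by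
    intro i
    obtain ⟨m, hm0, _, _, hcomp⟩ := harcA i
    have hphi : M.comp x (T.cd cy i) ((⇑M.ρ)^[1] (M.rv (T.cd cy i))) := by
      rw [Function.iterate_one, ← M.hφ]
      exact comp_φ _
    exact comp_trans hphi (hcomp 1 le_rfl hm0)
  have hchain' : ∀ i, M.comp x (M.rv (T.cd cy (i+1))) (M.rv (T.cd cy i)) := by
    intro i
    obtain ⟨m, hm0, _, _, hcomp⟩ := harcB i
    have hphi : M.comp x (M.rv (T.cd cy (i+1))) ((⇑M.ρ)^[1] (T.cd cy (i+1))) := by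
      rw [Function.iterate_one]
      have h2 := comp_φ (M := M) (x := x) (M.rv (T.cd cy (i+1)))
      rw [← M.ρ_eq_φ_rv] at h2
      exact h2
    exact comp_trans hphi (hcomp 1 le_rfl hm0)
  have hchain0 : ∀ r, M.comp x (T.cd cy 0) (T.cd cy r) := by
    intro r
    induction r with
    | zero => exact comp_refl _
    | succ r ih => exact comp_trans ih (hchain r)
  have hchain0' : ∀ r, M.comp x (M.rv (T.cd cy r)) (M.rv (T.cd cy 0)) := by
    intro r
    induction r with
    | zero => exact comp_refl _
    | succ r ih => exact comp_trans (hchain' r) ih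
  -- every dart is on one of the two sides
  have hsplit : ∀ d, M.comp x d (T.cd cy 0) ∨ M.comp x d (M.rv (T.cd cy 0)) := by
    intro d
    rcases comp_or_x (M := M) (x := x) (M.reach_all d (T.cd cy 0)) with h | ⟨g, hg, hxg⟩
    · exact Or.inl h
    · obtain ⟨r, _, hd⟩ := cy.cx_norm g hxg
      rcases hd with ⟨h1, h2⟩ | ⟨h1, h2⟩
      · have hgeq : g = T.cd cy r := Subtype.ext (Prod.ext_iff.mpr ⟨h1, h2⟩)
        left
        refine comp_trans hg ?_
        rw [hgeq]
        exact comp_symm (hchain0 r)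
      · have hgeq : g = M.rv (T.cd cy r) := by
          apply Subtype.ext
          apply Prod.ext_iff.mpr
          constructor
          · rw [h2, T.rv_cd_tl]
          · rw [h1, T.rv_cd_hd]
        right
        refine comp_trans hg ?_
        rw [hgeq]
        exact hchain0' r
  -- the two sides are distinct components
  have hcomp_T : ∀ d e, M.comp x d e → Tc d = Tc e := by
    intro d e h
    refine comp_const hTφ ?_ h
    intro g hg
    have h2 := hTrv g
    rw [if_neg hg] at h2
    calc Tc (M.rv g) = Tc g + (Tc g + Tc (M.rv g)) := by
          rw [← add_assoc, CharTwo.add_self_eq_zero, zero_add]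
      _ = Tc g := by rw [h2, add_zero]
  have hsides : ¬ M.comp x (T.cd cy 0) (M.rv (T.cd cy 0)) := by
    intro h
    have hTrv0 := hTrv (T.cd cy 0)
    rw [if_pos (T.cx_cd cy 0)] at hTrv0
    rw [hcomp_T _ _ h, CharTwo.add_self_eq_zero] at hTrv0
    exact zero_ne_one hTrv0
  -- outer darts
  have houterdarts : ∀ w : V, w ∈ ({T.s, T.a, T.t, T.b} : Set V) →
      ∃ od : Dart E, od.1.1 = w ∧ M.comp x od T.d₀ := by
    intro w hw
    simp only [Set.mem_insert_iff, Set.mem_singleton_iff] at hw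
    rcases hw with h | h | h | h
    · exact ⟨T.d₀, by rw [T.houter_s, h], comp_refl _⟩
    · exact ⟨M.φ T.d₀, by rw [show (M.φ T.d₀) = T.φ T.d₀ from rfl, T.houter_a, h],
        comp_symm (comp_φ _)⟩
    · exact ⟨(⇑M.φ)^[2] T.d₀,
        by rw [show ((⇑M.φ)^[2] T.d₀) = (⇑T.φ)^[2] T.d₀ from rfl, T.houter_t, h],
        comp_symm (comp_φ_iter 2 _)⟩
    · exact ⟨(⇑M.φ)^[3] T.d₀,
        by rw [show ((⇑M.φ)^[3] T.d₀) = (⇑T.φ)^[3] T.d₀ from rfl, T.houter_b, h],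
        comp_symm (comp_φ_iter 3 _)⟩
  rcases hsplit T.d₀ with hcase | hcase
  · -- CASE B: the region is on the `rv` side, blue-out darts
    have hreg₀ : ¬ M.comp x (M.rv (T.cd cy 0)) T.d₀ := by
      intro h
      exact hsides (comp_symm (comp_trans h hcase))
    have hGoodCyc : ∀ i, ∃ e : Dart E, e.1.1 = cy.c (i + 1) ∧
        M.comp x e (M.rv (T.cd cy 0)) ∧ T.B (cy.c (i + 1)) e.1.2 := by
      intro i
      obtain ⟨m, hm0, hmeq, hnx, hcomp⟩ := harcB i
      have hP0 : dartCat T.R T.B ((⇑M.ρ)^[0] (T.cd cy (i+1))).1 = 0 := by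
        simp only [Function.iterate_zero, id_eq]
        exact T.cat_of_R (cy.hS (i+1))
      have hPm : dartCat T.R T.B ((⇑M.ρ)^[m] (T.cd cy (i+1))).1 = 2 := by
        rw [hmeq]
        have h2 : (M.rv (T.cd cy i)).1 = (cy.c (i+1), cy.c i) := M.hrev _
        rw [h2]
        exact T.cat_of_Rrev (cy.hS i)
      have hsteps : ∀ k, k < m →
          dartCat T.R T.B ((⇑M.ρ)^[k+1] (T.cd cy (i+1))).1 =
            dartCat T.R T.B ((⇑M.ρ)^[k] (T.cd cy (i+1))).1 ∨
          dartCat T.R T.B ((⇑M.ρ)^[k+1] (T.cd cy (i+1))).1 =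
            dartCat T.R T.B ((⇑M.ρ)^[k] (T.cd cy (i+1))).1 + 1 := by
        intro k _
        have htl : ((⇑M.ρ)^[k] (T.cd cy (i+1))).1.1 = cy.c (i+1) := by
          rw [M.tl_ρ_iter]
          rfl
        have hstep := (T.hblocks (cy.c (i+1)) (T.avoid cy (i+1))).1
          ((⇑M.ρ)^[k] (T.cd cy (i+1))) htl
        rw [show T.ρ ((⇑M.ρ)^[k] (T.cd cy (i+1))) =
          (⇑M.ρ)^[k+1] (T.cd cy (i+1)) from
          (Function.iterate_succ_apply' (⇑M.ρ) k _).symm] at hstep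
        exact hstep
      obtain ⟨k₀, hk₀0, hk₀m, hk₀cat⟩ := fin4_pass
        (fun k => dartCat T.R T.B ((⇑M.ρ)^[k] (T.cd cy (i+1))).1) hsteps 0 hP0
        (by show dartCat T.R T.B ((⇑M.ρ)^[m] (T.cd cy (i+1))).1 ≠ 0
            rw [hPm]; decide)
        (by show dartCat T.R T.B ((⇑M.ρ)^[m] (T.cd cy (i+1))).1 ≠ 0 + 1
            rw [hPm]; decide)
      have htle : ((⇑M.ρ)^[k₀] (T.cd cy (i+1))).1.1 = cy.c (i+1) := by
        rw [M.tl_ρ_iter]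
        rfl
      have hBe : T.B (cy.c (i+1)) ((⇑M.ρ)^[k₀] (T.cd cy (i+1))).1.2 := by
        have hdec := T.cat1_decode (u := ((⇑M.ρ)^[k₀] (T.cd cy (i+1))).1.1)
          (w := ((⇑M.ρ)^[k₀] (T.cd cy (i+1))).1.2) hk₀cat
        rwa [htle] at hdec
      exact ⟨(⇑M.ρ)^[k₀] (T.cd cy (i+1)), htle,
        comp_trans (hcomp k₀ hk₀0 (le_of_lt hk₀m)) (hchain0' i), hBe⟩
    have hGoodStep : ∀ e : Dart E, M.comp x e (M.rv (T.cd cy 0)) →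
        T.B e.1.1 e.1.2 →
        ∃ e' : Dart E, e'.1.1 = e.1.2 ∧ M.comp x e' (M.rv (T.cd cy 0)) ∧
          T.B e.1.2 e'.1.2 := by
      intro e hreg hBe
      have hnxe : ¬ x e := T.blue_not_cx cy (Or.inl hBe)
      have hrve : M.comp x (M.rv e) (M.rv (T.cd cy 0)) :=
        comp_trans (comp_symm (comp_rv hnxe)) hreg
      have htlrv : (M.rv e).1.1 = e.1.2 := M.tl_rv e
      by_cases hcyc : ∃ j, e.1.2 = cy.c j
      · obtain ⟨j, hj⟩ := hcyc
        obtain ⟨i, hi⟩ := T.vertex_form cy j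
        obtain ⟨e', h1, h2, h3⟩ := hGoodCyc i
        refine ⟨e', by rw [h1, ← hi, ← hj], h2, ?_⟩
        rw [← hi, ← hj] at h3
        exact h3
      · have hnx : ∀ g : Dart E, g.1.1 = e.1.2 → ¬ x g := by
          intro g hg hxg
          obtain ⟨jj, hjj⟩ := T.cx_tail_vertex cy hxg
          exact hcyc ⟨jj + 1, by rw [← hg, hjj]⟩
        have hall : ∀ g : Dart E, g.1.1 = e.1.2 →
            M.comp x g (M.rv (T.cd cy 0)) := by
          intro g hg
          refine comp_trans (M.vertex_comp x ?_ ?_) hrve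
          · rw [hg, htlrv]
          · intro g' hg'
            exact hnx g' (by rw [hg', hg])
        have houterv : e.1.2 ∉ ({T.s, T.a, T.t, T.b} : Set V) := by
          intro hmem
          obtain ⟨od, hod1, hod2⟩ := houterdarts _ hmem
          exact hreg₀ (comp_trans (comp_symm (hall od hod1)) hod2)
        obtain ⟨e', he'1, he'cat⟩ := (T.hblocks e.1.2 houterv).2 1
        have hBe' : T.B e.1.2 e'.1.2 := by
          have hdec := T.cat1_decode (u := e'.1.1) (w := e'.1.2) he'cat
          rwa [he'1] at hdec
        exact ⟨e', he'1, hall e' he'1, hBe'⟩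
    -- walk construction
    obtain ⟨e₀, he₀1, he₀2, he₀3⟩ := hGoodCyc (cy.n - 1)
    have hstep' : ∀ e : {e : Dart E //
        M.comp x e (M.rv (T.cd cy 0)) ∧ T.B e.1.1 e.1.2},
        ∃ e' : {e : Dart E //
          M.comp x e (M.rv (T.cd cy 0)) ∧ T.B e.1.1 e.1.2},
          e'.1.1.1 = e.1.1.2 := by
      rintro ⟨e, hreg, hBe⟩
      obtain ⟨e', h1, h2, h3⟩ := hGoodStep e hreg hBe
      exact ⟨⟨e', h2, by rw [h1]; exact h3⟩, h1⟩
    have he₀B : T.B e₀.1.1 e₀.1.2 := by rw [he₀1]; exact he₀3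
    set fstep : {e : Dart E // M.comp x e (M.rv (T.cd cy 0)) ∧ T.B e.1.1 e.1.2} →
        {e : Dart E // M.comp x e (M.rv (T.cd cy 0)) ∧ T.B e.1.1 e.1.2} :=
      fun e => Classical.choose (hstep' e) with hfstep
    have hfspec : ∀ e, (fstep e).1.1.1 = e.1.1.2 :=
      fun e => Classical.choose_spec (hstep' e)
    set gd : ℕ → {e : Dart E // M.comp x e (M.rv (T.cd cy 0)) ∧ T.B e.1.1 e.1.2} :=
      fun j => fstep^[j] ⟨e₀, he₀2, he₀B⟩ with hgddef
    have hgdstep : ∀ j, (gd (j+1)).1.1.1 = (gd j).1.1.2 := by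
      intro j
      rw [hgddef]
      simp only []
      rw [Function.iterate_succ_apply']
      exact hfspec _
    have hwalk : ∀ j, (fun p q => ∃ hE : E p q,
        M.comp x (⟨(p, q), hE⟩ : Dart E) (M.rv (T.cd cy 0)) ∧ T.B p q)
        ((gd j).1.1.1) ((gd (j+1)).1.1.1) := by
      intro j
      rw [hgdstep j]
      refine ⟨(gd j).1.2, ?_, (gd j).2.2⟩
      exact (gd j).2.1
    obtain ⟨cyS⟩ := walk_cyc (S := fun p q => ∃ hE : E p q,
      M.comp x (⟨(p, q), hE⟩ : Dart E) (M.rv (T.cd cy 0)) ∧ T.B p q)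
      (fun j => (gd j).1.1.1) hwalk
    have hmono : ∀ u v, (fun p q => ∃ hE : E p q,
        M.comp x (⟨(p, q), hE⟩ : Dart E) (M.rv (T.cd cy 0)) ∧ T.B p q) u v →
        T.B u v := by
      rintro u v ⟨_, _, h⟩
      exact h
    refine ⟨cyS.mono hmono, ?_⟩
    set cyB := cyS.mono hmono with hcyB
    have hx'reg : ∀ d : Dart E, cyB.cx d → M.comp x d (M.rv (T.cd cy 0)) := by
      intro d hd
      obtain ⟨r, _, hpair⟩ := cyB.cx_norm d hd
      obtain ⟨hE, hregd, hBd⟩ := cyS.hS r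
      rcases hpair with ⟨h1, h2⟩ | ⟨h1, h2⟩
      · have hdeq : d = (⟨(cyS.c r, cyS.c (r+1)), hE⟩ : Dart E) :=
          Subtype.ext (Prod.ext_iff.mpr ⟨h1, h2⟩)
        rw [hdeq]
        exact hregd
      · have hdeq : d = M.rv (⟨(cyS.c r, cyS.c (r+1)), hE⟩ : Dart E) := by
          apply Subtype.ext
          apply Prod.ext_iff.mpr
          constructor
          · rw [h2]
            exact (M.tl_rv (⟨(cyS.c r, cyS.c (r+1)), hE⟩ : Dart E)).symm
          · rw [h1]
            exact (M.hd_rv (⟨(cyS.c r, cyS.c (r+1)), hE⟩ : Dart E)).symm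
        rw [hdeq]
        refine comp_trans (comp_symm (comp_rv ?_)) hregd
        exact T.blue_not_cx cy (Or.inl hBd)
    have hy : ∀ e : Dart E, cyB.cx e → ¬ M.comp x e T.d₀ := by
      intro e he hcon
      exact hreg₀ (comp_trans (comp_symm (hx'reg e he)) hcon)
    have hsub : {d : Dart E | ¬ M.comp (fun e => cyB.cx e) d T.d₀} ⊆
        {d : Dart E | ¬ M.comp x d T.d₀} := by
      intro d hd hcon
      exact hd (comp_transfer hy hcon hcon)
    rw [Set.ssubset_iff_of_subset hsub]
    refine ⟨M.rv (T.cd cy 0), hreg₀, ?_⟩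
    intro hnew
    apply hnew
    have hnx' : ¬ cyB.cx (M.rv (T.cd cy 0)) := by
      intro h
      obtain ⟨r, _, hpair⟩ := cyB.cx_norm _ h
      have hBr := cyB.hS r
      rcases hpair with ⟨h1, h2⟩ | ⟨h1, h2⟩
      · rw [M.tl_rv, T.cd_hd] at h1
        rw [M.hd_rv, T.cd_tl] at h2
        rw [← h1, ← h2] at hBr
        exact (T.R_not_B (cy.hS 0)).2 hBr
      · rw [M.hd_rv, T.cd_tl] at h1
        rw [M.tl_rv, T.cd_hd] at h2
        rw [← h1, ← h2] at hBr
        exact (T.R_not_B (cy.hS 0)).1 hBr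
    have hstep1 : M.comp (fun e => cyB.cx e) (M.rv (T.cd cy 0)) (T.cd cy 0) := by
      have hstep0 := comp_rv (M := M) (x := fun e => cyB.cx e) hnx'
      rw [M.rv_rv] at hstep0
      exact hstep0
    exact comp_trans hstep1 (comp_transfer hy (comp_symm hcase) (comp_symm hcase))
  · -- CASE A: the region is on the `cd` side, blue-in darts
    have hreg₀ : ¬ M.comp x (T.cd cy 0) T.d₀ := by
      intro h
      exact hsides (comp_trans h hcase)
    have hGoodCyc : ∀ i, ∃ e : Dart E, e.1.1 = cy.c (i + 1) ∧
        M.comp x e (T.cd cy 0) ∧ T.B e.1.2 (cy.c (i + 1)) := by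
      intro i
      obtain ⟨m, hm0, hmeq, hnx, hcomp⟩ := harcA i
      have hP0 : dartCat T.R T.B ((⇑M.ρ)^[0] (M.rv (T.cd cy i))).1 = 2 := by
        simp only [Function.iterate_zero, id_eq]
        have h2 : (M.rv (T.cd cy i)).1 = (cy.c (i+1), cy.c i) := M.hrev _
        rw [h2]
        exact T.cat_of_Rrev (cy.hS i)
      have hPm : dartCat T.R T.B ((⇑M.ρ)^[m] (M.rv (T.cd cy i))).1 = 0 := by
        rw [hmeq]
        exact T.cat_of_R (cy.hS (i+1))
      have hsteps : ∀ k, k < m →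
          dartCat T.R T.B ((⇑M.ρ)^[k+1] (M.rv (T.cd cy i))).1 =
            dartCat T.R T.B ((⇑M.ρ)^[k] (M.rv (T.cd cy i))).1 ∨
          dartCat T.R T.B ((⇑M.ρ)^[k+1] (M.rv (T.cd cy i))).1 =
            dartCat T.R T.B ((⇑M.ρ)^[k] (M.rv (T.cd cy i))).1 + 1 := by
        intro k _
        have htl : ((⇑M.ρ)^[k] (M.rv (T.cd cy i))).1.1 = cy.c (i+1) := by
          rw [M.tl_ρ_iter, T.rv_cd_tl]
        have hstep := (T.hblocks (cy.c (i+1)) (T.avoid cy (i+1))).1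
          ((⇑M.ρ)^[k] (M.rv (T.cd cy i))) htl
        rw [show T.ρ ((⇑M.ρ)^[k] (M.rv (T.cd cy i))) =
          (⇑M.ρ)^[k+1] (M.rv (T.cd cy i)) from
          (Function.iterate_succ_apply' (⇑M.ρ) k _).symm] at hstep
        exact hstep
      obtain ⟨k₀, hk₀0, hk₀m, hk₀cat⟩ := fin4_pass
        (fun k => dartCat T.R T.B ((⇑M.ρ)^[k] (M.rv (T.cd cy i))).1) hsteps 2 hP0
        (by show dartCat T.R T.B ((⇑M.ρ)^[m] (M.rv (T.cd cy i))).1 ≠ 2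
            rw [hPm]; decide)
        (by show dartCat T.R T.B ((⇑M.ρ)^[m] (M.rv (T.cd cy i))).1 ≠ 2 + 1
            rw [hPm]; decide)
      have htle : ((⇑M.ρ)^[k₀] (M.rv (T.cd cy i))).1.1 = cy.c (i+1) := by
        rw [M.tl_ρ_iter, T.rv_cd_tl]
      have hk₀cat3 : dartCat T.R T.B ((⇑M.ρ)^[k₀] (M.rv (T.cd cy i))).1 = 3 := by
        rw [hk₀cat]
        decide
      have hBe : T.B ((⇑M.ρ)^[k₀] (M.rv (T.cd cy i))).1.2 (cy.c (i+1)) := by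
        have hdec := T.cat3_decode (u := ((⇑M.ρ)^[k₀] (M.rv (T.cd cy i))).1.1)
          (w := ((⇑M.ρ)^[k₀] (M.rv (T.cd cy i))).1.2)
          ((⇑M.ρ)^[k₀] (M.rv (T.cd cy i))).2
          (innerPair (by rw [htle]; exact T.avoid cy (i+1))) hk₀cat3
        rwa [htle] at hdec
      exact ⟨(⇑M.ρ)^[k₀] (M.rv (T.cd cy i)), htle,
        comp_trans (hcomp k₀ hk₀0 (le_of_lt hk₀m))
          (comp_symm (hchain0 (i+1))), hBe⟩
    have hGoodStep : ∀ e : Dart E, M.comp x e (T.cd cy 0) →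
        T.B e.1.2 e.1.1 →
        ∃ e' : Dart E, e'.1.1 = e.1.2 ∧ M.comp x e' (T.cd cy 0) ∧
          T.B e'.1.2 e.1.2 := by
      intro e hreg hBe
      have hnxe : ¬ x e := T.blue_not_cx cy (Or.inr hBe)
      have hrve : M.comp x (M.rv e) (T.cd cy 0) :=
        comp_trans (comp_symm (comp_rv hnxe)) hreg
      have htlrv : (M.rv e).1.1 = e.1.2 := M.tl_rv e
      by_cases hcyc : ∃ j, e.1.2 = cy.c j
      · obtain ⟨j, hj⟩ := hcyc
        obtain ⟨i, hi⟩ := T.vertex_form cy j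
        obtain ⟨e', h1, h2, h3⟩ := hGoodCyc i
        refine ⟨e', by rw [h1, ← hi, ← hj], h2, ?_⟩
        rw [← hi, ← hj] at h3
        exact h3
      · have hnx : ∀ g : Dart E, g.1.1 = e.1.2 → ¬ x g := by
          intro g hg hxg
          obtain ⟨jj, hjj⟩ := T.cx_tail_vertex cy hxg
          exact hcyc ⟨jj + 1, by rw [← hg, hjj]⟩
        have hall : ∀ g : Dart E, g.1.1 = e.1.2 →
            M.comp x g (T.cd cy 0) := by
          intro g hg
          refine comp_trans (M.vertex_comp x ?_ ?_) hrve
          · rw [hg, htlrv]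
          · intro g' hg'
            exact hnx g' (by rw [hg', hg])
        have houterv : e.1.2 ∉ ({T.s, T.a, T.t, T.b} : Set V) := by
          intro hmem
          obtain ⟨od, hod1, hod2⟩ := houterdarts _ hmem
          exact hreg₀ (comp_trans (comp_symm (hall od hod1)) hod2)
        obtain ⟨e', he'1, he'cat⟩ := (T.hblocks e.1.2 houterv).2 3
        have hBe' : T.B e'.1.2 e.1.2 := by
          have hdec := T.cat3_decode (u := e'.1.1) (w := e'.1.2) e'.2
            (innerPair (by rw [he'1]; exact houterv)) he'cat
          rwa [he'1] at hdec
        exact ⟨e', he'1, hall e' he'1, hBe'⟩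
    -- walk construction (backwards along blue)
    obtain ⟨e₀, he₀1, he₀2, he₀3⟩ := hGoodCyc (cy.n - 1)
    have hstep' : ∀ e : {e : Dart E //
        M.comp x e (T.cd cy 0) ∧ T.B e.1.2 e.1.1},
        ∃ e' : {e : Dart E //
          M.comp x e (T.cd cy 0) ∧ T.B e.1.2 e.1.1},
          e'.1.1.1 = e.1.1.2 := by
      rintro ⟨e, hreg, hBe⟩
      obtain ⟨e', h1, h2, h3⟩ := hGoodStep e hreg hBe
      exact ⟨⟨e', h2, by rw [h1]; exact h3⟩, h1⟩
    have he₀B : T.B e₀.1.2 e₀.1.1 := by rw [he₀1]; exact he₀3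
    set fstep : {e : Dart E // M.comp x e (T.cd cy 0) ∧ T.B e.1.2 e.1.1} →
        {e : Dart E // M.comp x e (T.cd cy 0) ∧ T.B e.1.2 e.1.1} :=
      fun e => Classical.choose (hstep' e) with hfstep
    have hfspec : ∀ e, (fstep e).1.1.1 = e.1.1.2 :=
      fun e => Classical.choose_spec (hstep' e)
    set gd : ℕ → {e : Dart E // M.comp x e (T.cd cy 0) ∧ T.B e.1.2 e.1.1} :=
      fun j => fstep^[j] ⟨e₀, he₀2, he₀B⟩ with hgddef
    have hgdstep : ∀ j, (gd (j+1)).1.1.1 = (gd j).1.1.2 := by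
      intro j
      rw [hgddef]
      simp only []
      rw [Function.iterate_succ_apply']
      exact hfspec _
    have hwalk : ∀ j, (fun p q => ∃ hE : E p q,
        M.comp x (⟨(p, q), hE⟩ : Dart E) (T.cd cy 0) ∧ T.B q p)
        ((gd j).1.1.1) ((gd (j+1)).1.1.1) := by
      intro j
      rw [hgdstep j]
      refine ⟨(gd j).1.2, ?_, (gd j).2.2⟩
      exact (gd j).2.1
    obtain ⟨cyS⟩ := walk_cyc (S := fun p q => ∃ hE : E p q,
      M.comp x (⟨(p, q), hE⟩ : Dart E) (T.cd cy 0) ∧ T.B q p)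
      (fun j => (gd j).1.1.1) hwalk
    have hmono : ∀ u v, (fun p q => ∃ hE : E p q,
        M.comp x (⟨(p, q), hE⟩ : Dart E) (T.cd cy 0) ∧ T.B q p) u v →
        (fun p q => T.B q p) u v := by
      rintro u v ⟨_, _, h⟩
      exact h
    refine ⟨(cyS.mono hmono).rev, ?_⟩
    set cyB := (cyS.mono hmono).rev with hcyB
    have hcxB : ∀ d : Dart E, cyB.cx d ↔ cyS.cx d := by
      intro d
      rw [hcyB]
      exact (cyS.mono hmono).cx_rev d
    have hx'reg : ∀ d : Dart E, cyB.cx d → M.comp x d (T.cd cy 0) := by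
      intro d hd
      rw [hcxB] at hd
      obtain ⟨r, _, hpair⟩ := cyS.cx_norm d hd
      obtain ⟨hE, hregd, hBd⟩ := cyS.hS r
      rcases hpair with ⟨h1, h2⟩ | ⟨h1, h2⟩
      · have hdeq : d = (⟨(cyS.c r, cyS.c (r+1)), hE⟩ : Dart E) :=
          Subtype.ext (Prod.ext_iff.mpr ⟨h1, h2⟩)
        rw [hdeq]
        exact hregd
      · have hdeq : d = M.rv (⟨(cyS.c r, cyS.c (r+1)), hE⟩ : Dart E) := by
          apply Subtype.ext
          apply Prod.ext_iff.mpr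
          constructor
          · rw [h2]
            exact (M.tl_rv (⟨(cyS.c r, cyS.c (r+1)), hE⟩ : Dart E)).symm
          · rw [h1]
            exact (M.hd_rv (⟨(cyS.c r, cyS.c (r+1)), hE⟩ : Dart E)).symm
        rw [hdeq]
        refine comp_trans (comp_symm (comp_rv ?_)) hregd
        exact T.blue_not_cx cy (Or.inr hBd)
    have hy : ∀ e : Dart E, cyB.cx e → ¬ M.comp x e T.d₀ := by
      intro e he hcon
      exact hreg₀ (comp_trans (comp_symm (hx'reg e he)) hcon)
    have hsub : {d : Dart E | ¬ M.comp (fun e => cyB.cx e) d T.d₀} ⊆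
        {d : Dart E | ¬ M.comp x d T.d₀} := by
      intro d hd hcon
      exact hd (comp_transfer hy hcon hcon)
    rw [Set.ssubset_iff_of_subset hsub]
    refine ⟨T.cd cy 0, hreg₀, ?_⟩
    intro hnew
    apply hnew
    have hnx' : ¬ cyB.cx (T.cd cy 0) := by
      intro h
      rw [hcxB] at h
      obtain ⟨r, _, hpair⟩ := cyS.cx_norm _ h
      obtain ⟨_, _, hBr⟩ := cyS.hS r
      rcases hpair with ⟨h1, h2⟩ | ⟨h1, h2⟩
      · rw [T.cd_tl] at h1
        rw [T.cd_hd] at h2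
        rw [← h1, ← h2] at hBr
        exact (T.R_not_B (cy.hS 0)).2 hBr
      · rw [T.cd_hd] at h1
        rw [T.cd_tl] at h2
        rw [← h1, ← h2] at hBr
        exact (T.R_not_B (cy.hS 0)).1 hBr
    have hstep1 : M.comp (fun e => cyB.cx e) (T.cd cy 0) (M.rv (T.cd cy 0)) :=
      comp_rv hnx'
    exact comp_trans hstep1 (comp_transfer hy (comp_symm hcase) (comp_symm hcase))

/-- There is no red cycle. -/
theorem no_cyc (T : TCtx V E) (cy : Cyc T.R) : False := by
  classical
  have hshift : ∀ (z : Dart E → Prop),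
      {d : Dart E | ¬ T.toMapCtx.comp z d (T.toMapCtx.φ T.d₀)} =
      {d : Dart E | ¬ T.toMapCtx.comp z d T.d₀} := by
    intro z
    ext d
    simp only [Set.mem_setOf_eq]
    constructor
    · intro h hc
      exact h (comp_trans hc (comp_φ _))
    · intro h hc
      exact h (comp_trans hc (comp_symm (comp_φ _)))
  have main : ∀ N : ℕ,
      (∀ cyR : Cyc T.R,
        {d : Dart E | ¬ T.toMapCtx.comp (fun e => cyR.cx e) d T.d₀}.ncard = N →
          False) ∧
      (∀ cyB : Cyc T.B,
        {d : Dart E | ¬ T.toMapCtx.comp (fun e => cyB.cx e) d T.d₀}.ncard = N →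
          False) := by
    intro N
    induction N using Nat.strong_induction_on with
    | _ N IH =>
    constructor
    · intro cyR hN
      obtain ⟨cy', hsub⟩ := T.key cyR
      have hlt : {d : Dart E |
          ¬ T.toMapCtx.comp (fun e => cy'.cx e) d T.d₀}.ncard < N := by
        rw [← hN]
        exact Set.ncard_lt_ncard hsub (Set.toFinite _)
      exact (IH _ hlt).2 cy' rfl
    · intro cyB hN
      obtain ⟨cy'', hsub⟩ := T.swap.key cyB
      rw [show T.swap.toMapCtx = T.toMapCtx from rfl,
        show T.swap.d₀ = T.toMapCtx.φ T.d₀ from rfl, hshift, hshift] at hsub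
      have hlt : {d : Dart E |
          ¬ T.toMapCtx.comp (fun e => cy''.cx e) d T.d₀}.ncard < N := by
        rw [← hN]
        exact Set.ncard_lt_ncard hsub (Set.toFinite _)
      have hcx2 : ∀ d : Dart E, (Cyc.rev cy'').cx d ↔ cy''.cx d := cy''.cx_rev
      have hseteq : {d : Dart E |
          ¬ T.toMapCtx.comp (fun e => (Cyc.rev cy'').cx e) d T.d₀} =
          {d : Dart E | ¬ T.toMapCtx.comp (fun e => cy''.cx e) d T.d₀} := by
        ext d
        simp only [Set.mem_setOf_eq]
        constructor
        · intro h hc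
          exact h (comp_congr (fun g => (hcx2 g).symm) hc)
        · intro h hc
          exact h (comp_congr (fun g => hcx2 g) hc)
      refine (IH _ ?_).1 (Cyc.rev cy'') rfl
      exact (congrArg Set.ncard hseteq).trans_lt hlt
  exact (main _).1 cy rfl

end TCtx

end TSB

/-- **Transversal structures give bipolar orientations.**  Let `G` be an internally
4-connected inner triangulation of a 4-gon with outer vertices `s, a, t, b` in
clockwise order: a connected plane graph (embedding given by a rotation system `ρ` on
darts with face-tracing permutation `φ = ρ ∘ rev` and Euler's formula), whose outer
face is the 4-gon `s a t b`, all inner faces are triangles, and which has no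
separating triangle.  Let `(R, B)` be a transversal structure: an orientation and
red/blue coloring of the inner edges such that all inner edges at `s, a, t, b` are
respectively red outgoing, blue outgoing, red incoming, blue incoming, and around
each inner vertex the darts form four non-empty blocks, in clockwise order: red
outgoing, blue outgoing, red incoming, blue incoming.  Then the red graph
`E_R⁺ = R ∪ {(s,a), (s,b), (a,t), (b,t)}` is a bipolar orientation with source `s`
and sink `t`, and the blue graph `E_B⁺ = B ∪ {(a,s), (a,t), (s,b), (t,b)}` is a
bipolar orientation with source `a` and sink `b`. -/
theorem transversal_structure_bipolar {V : Type*} [Fintype V] [DecidableEq V]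
    (E : V → V → Prop) (hsymm : ∀ u v, E u v → E v u) (hirr : ∀ v, ¬ E v v)
    (ρ rev φ : Equiv.Perm {p : V × V // E p.1 p.2})
    (hρ_tail : ∀ d, (ρ d).1.1 = d.1.1)
    (hρ_cyclic : ∀ d d' : {p : V × V // E p.1 p.2},
      d.1.1 = d'.1.1 → ∃ n : ℕ, (⇑ρ)^[n] d = d')
    (hrev : ∀ d, (rev d).1 = (d.1.2, d.1.1))
    (hφ : ∀ d, φ d = ρ (rev d))
    (hconn : ∀ u v : V, Relation.ReflTransGen E u v)
    (heuler : (Fintype.card V : ℤ)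
        - Fintype.card {p : V × V // E p.1 p.2} / 2 + numOrbits φ = 2)
    -- the outer face is a 4-gon with vertices `s, a, t, b` in clockwise order
    (s a t b : V) (houter_distinct : [s, a, t, b].Nodup)
    (d₀ : {p : V × V // E p.1 p.2})
    (houter4 : Function.minimalPeriod (⇑φ) d₀ = 4)
    (houter_s : d₀.1.1 = s) (houter_a : (φ d₀).1.1 = a)
    (houter_t : ((⇑φ)^[2] d₀).1.1 = t) (houter_b : ((⇑φ)^[3] d₀).1.1 = b)
    -- all inner faces are triangles
    (htri : ∀ d : {p : V × V // E p.1 p.2}, ¬ φ.SameCycle d₀ d →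
      Function.minimalPeriod (⇑φ) d = 3)
    -- internal 4-connectivity: no separating triangle
    (hnosep : ¬ ∃ u v w : V, E u v ∧ E v w ∧ E u w ∧
      ∃ x y : V, x ∉ ({u, v, w} : Set V) ∧ y ∉ ({u, v, w} : Set V) ∧
        ¬ Relation.ReflTransGen
          (fun p q => E p q ∧ p ∉ ({u, v, w} : Set V) ∧ q ∉ ({u, v, w} : Set V)) x y)
    -- `R`, `B` orient and color exactly the inner edges
    (R B : V → V → Prop)
    (hRE : ∀ u v, R u v → E u v) (hBE : ∀ u v, B u v → E u v)
    (hRinner : ∀ u v, R u v → ({u, v} : Set V) ∉ ({{s,a},{a,t},{t,b},{b,s}} : Set (Set V)))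
    (hBinner : ∀ u v, B u v → ({u, v} : Set V) ∉ ({{s,a},{a,t},{t,b},{b,s}} : Set (Set V)))
    (hexactly : ∀ u v, E u v → ({u, v} : Set V) ∉ ({{s,a},{a,t},{t,b},{b,s}} : Set (Set V)) →
      (R u v ∨ R v u ∨ B u v ∨ B v u) ∧
      (R u v → ¬ R v u ∧ ¬ B u v ∧ ¬ B v u) ∧
      (R v u → ¬ B u v ∧ ¬ B v u) ∧ (B u v → ¬ B v u))
    -- condition (1): inner edges at the outer vertices
    (hs : ∀ v, E s v → ({s, v} : Set V) ∉ ({{s,a},{a,t},{t,b},{b,s}} : Set (Set V)) → R s v)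
    (ha : ∀ v, E a v → ({a, v} : Set V) ∉ ({{s,a},{a,t},{t,b},{b,s}} : Set (Set V)) → B a v)
    (ht : ∀ v, E t v → ({t, v} : Set V) ∉ ({{s,a},{a,t},{t,b},{b,s}} : Set (Set V)) → R v t)
    (hb : ∀ v, E b v → ({b, v} : Set V) ∉ ({{s,a},{a,t},{t,b},{b,s}} : Set (Set V)) → B v b)
    -- condition (2): four non-empty clockwise blocks around each inner vertex
    (hblocks : ∀ v : V, v ∉ ({s, a, t, b} : Set V) →
      (∀ e : {p : V × V // E p.1 p.2}, e.1.1 = v →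
        dartCat R B (ρ e).1 = dartCat R B e.1 ∨
        dartCat R B (ρ e).1 = dartCat R B e.1 + 1) ∧
      (∀ c : Fin 4, ∃ e : {p : V × V // E p.1 p.2}, e.1.1 = v ∧ dartCat R B e.1 = c)) :
    -- conclusion: the red and blue graphs are bipolar orientations
    (let Rp : V → V → Prop := fun u v => R u v ∨
        (u, v) = (s, a) ∨ (u, v) = (s, b) ∨ (u, v) = (a, t) ∨ (u, v) = (b, t)
     (∀ v : V, ¬ Relation.TransGen Rp v v) ∧
     (∀ u, ¬ Rp u s) ∧ (∀ v, (∀ u, ¬ Rp u v) → v = s) ∧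
     (∀ u, ¬ Rp t u) ∧ (∀ v, (∀ u, ¬ Rp v u) → v = t)) ∧
    (let Bp : V → V → Prop := fun u v => B u v ∨
        (u, v) = (a, s) ∨ (u, v) = (a, t) ∨ (u, v) = (s, b) ∨ (u, v) = (t, b)
     (∀ v : V, ¬ Relation.TransGen Bp v v) ∧
     (∀ u, ¬ Bp u a) ∧ (∀ v, (∀ u, ¬ Bp u v) → v = a) ∧
     (∀ u, ¬ Bp b u) ∧ (∀ v, (∀ u, ¬ Bp v u) → v = b)) := by
  classical
  have hnd : s ≠ a ∧ s ≠ t ∧ s ≠ b ∧ a ≠ t ∧ a ≠ b ∧ t ≠ b := by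
    simp only [List.nodup_cons, List.mem_cons, List.mem_singleton,
      List.not_mem_nil, or_false, List.nodup_nil, and_true, not_or] at houter_distinct
    tauto
  let T : TSB.TCtx V E :=
    { hirr := hirr, hsymmE := hsymm, ρ := ρ, rv := rev, φ := φ,
      hρ_tail := hρ_tail, hρ_cyclic := hρ_cyclic, hrev := hrev, hφ := hφ,
      hconn := hconn, heuler := heuler,
      s := s, a := a, t := t, b := b, d₀ := d₀, R := R, B := B,
      hnodup := hnd, houter4 := houter4, houter_s := houter_s,
      houter_a := houter_a, houter_t := houter_t, houter_b := houter_b,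
      hRE := hRE, hBE := hBE, hRinner := hRinner, hBinner := hBinner,
      hexactly := hexactly, hcs := hs, hca := ha, hct := ht, hcb := hb,
      hblocks := hblocks }
  obtain ⟨hsa, hst, hsb, hat, hab, htb⟩ := hnd
  constructor
  · -- RED
    refine ⟨?_, ?_, ?_, ?_, ?_⟩
    · -- acyclicity
      intro v hcy
      obtain ⟨cyP⟩ := TSB.transGen_cyc hcy
      have hin : ∀ j, (fun u v => R u v ∨
          (u, v) = (s, a) ∨ (u, v) = (s, b) ∨ (u, v) = (a, t) ∨ (u, v) = (b, t))
          (cyP.c (j + cyP.n - 1)) (cyP.c j) := by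
        intro j
        have h := cyP.hS (j + cyP.n - 1)
        have he : j + cyP.n - 1 + 1 = j + cyP.n := by have := cyP.hpos; omega
        rw [he, cyP.hper] at h
        exact h
      have hnos : ∀ j, cyP.c j ≠ s := by
        intro j hj
        have h := hin j
        rw [hj] at h
        rcases h with h | h | h | h | h
        · have hinn := hRinner _ _ h
          have h2 := hs _ (hsymm _ _ (hRE _ _ h)) (TSB.pair_notmem hinn)
          exact ((hexactly _ _ (hRE _ _ h) hinn).2.1 h).1 h2
        · exact hsa (Prod.ext_iff.mp h).2
        · exact hsb (Prod.ext_iff.mp h).2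
        · exact hst (Prod.ext_iff.mp h).2
        · exact hst (Prod.ext_iff.mp h).2
      have hnoa : ∀ j, cyP.c j ≠ a := by
        intro j hj
        have h := hin j
        rw [hj] at h
        rcases h with h | h | h | h | h
        · have hinn := hRinner _ _ h
          have h2 := ha _ (hsymm _ _ (hRE _ _ h)) (TSB.pair_notmem hinn)
          exact ((hexactly _ _ (hRE _ _ h) hinn).2.1 h).2.2 h2
        · exact hnos _ (Prod.ext_iff.mp h).1
        · exact hab (Prod.ext_iff.mp h).2
        · exact hat (Prod.ext_iff.mp h).2
        · exact hat (Prod.ext_iff.mp h).2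
      have hnob : ∀ j, cyP.c j ≠ b := by
        intro j hj
        have h := hin j
        rw [hj] at h
        rcases h with h | h | h | h | h
        · have hinn := hRinner _ _ h
          have h2 := hb _ (hsymm _ _ (hRE _ _ h)) (TSB.pair_notmem hinn)
          exact ((hexactly _ _ (hRE _ _ h) hinn).2.1 h).2.1 h2
        · exact hab (Prod.ext_iff.mp h).2.symm
        · exact hnos _ (Prod.ext_iff.mp h).1
        · exact htb (Prod.ext_iff.mp h).2.symm
        · exact htb (Prod.ext_iff.mp h).2.symm
      have hnot : ∀ j, cyP.c j ≠ t := by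
        intro j hj
        have h := cyP.hS j
        rw [hj] at h
        rcases h with h | h | h | h | h
        · have hinn := hRinner _ _ h
          have h2 := ht _ (hRE _ _ h) hinn
          exact ((hexactly _ _ (hRE _ _ h) hinn).2.1 h).1 h2
        · exact hst (Prod.ext_iff.mp h).1.symm
        · exact hst (Prod.ext_iff.mp h).1.symm
        · exact hat (Prod.ext_iff.mp h).1.symm
        · exact htb (Prod.ext_iff.mp h).1
      have hR : ∀ i, R (cyP.c i) (cyP.c (i + 1)) := by
        intro i
        rcases cyP.hS i with h | h | h | h | h
        · exact h
        · exact absurd (Prod.ext_iff.mp h).1 (hnos i)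
        · exact absurd (Prod.ext_iff.mp h).1 (hnos i)
        · exact absurd (Prod.ext_iff.mp h).1 (hnoa i)
        · exact absurd (Prod.ext_iff.mp h).1 (hnob i)
      exact TSB.TCtx.no_cyc T ⟨cyP.n, cyP.c, cyP.hpos, cyP.hper, cyP.hinj, hR⟩
    · -- no edge into s
      intro u h
      rcases h with h | h | h | h | h
      · have hinn := hRinner _ _ h
        have h2 := hs _ (hsymm _ _ (hRE _ _ h)) (TSB.pair_notmem hinn)
        exact ((hexactly _ _ (hRE _ _ h) hinn).2.1 h).1 h2
      · exact hsa (Prod.ext_iff.mp h).2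
      · exact hsb (Prod.ext_iff.mp h).2
      · exact hst (Prod.ext_iff.mp h).2
      · exact hst (Prod.ext_iff.mp h).2
    · -- unique source
      intro v hv
      by_contra hne
      by_cases hva : v = a
      · exact hv s (Or.inr (Or.inl (by rw [hva])))
      by_cases hvb : v = b
      · exact hv s (Or.inr (Or.inr (Or.inl (by rw [hvb]))))
      by_cases hvt : v = t
      · exact hv a (Or.inr (Or.inr (Or.inr (Or.inl (by rw [hvt])))))
      have hvin : v ∉ ({s, a, t, b} : Set V) := by
        simp only [Set.mem_insert_iff, Set.mem_singleton_iff]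
        push_neg
        exact ⟨hne, hva, hvt, hvb⟩
      obtain ⟨e, he1, he2⟩ := (hblocks v hvin).2 2
      have hR2 := T.cat2_decode (u := e.1.1) (w := e.1.2) he2
      rw [he1] at hR2
      exact hv e.1.2 (Or.inl hR2)
    · -- no edge out of t
      intro u h
      rcases h with h | h | h | h | h
      · have hinn := hRinner _ _ h
        have h2 := ht _ (hRE _ _ h) hinn
        exact ((hexactly _ _ (hRE _ _ h) hinn).2.1 h).1 h2
      · exact hst (Prod.ext_iff.mp h).1.symm
      · exact hst (Prod.ext_iff.mp h).1.symm
      · exact hat (Prod.ext_iff.mp h).1.symm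
      · exact htb (Prod.ext_iff.mp h).1
    · -- unique sink
      intro v hv
      by_contra hne
      by_cases hvs : v = s
      · exact hv a (Or.inr (Or.inl (by rw [hvs])))
      by_cases hva : v = a
      · exact hv t (Or.inr (Or.inr (Or.inr (Or.inl (by rw [hva])))))
      by_cases hvb : v = b
      · exact hv t (Or.inr (Or.inr (Or.inr (Or.inr (by rw [hvb])))))
      have hvin : v ∉ ({s, a, t, b} : Set V) := by
        simp only [Set.mem_insert_iff, Set.mem_singleton_iff]
        push_neg
        exact ⟨hvs, hva, hne, hvb⟩
      obtain ⟨e, he1, he2⟩ := (hblocks v hvin).2 0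
      have hR0 := T.cat0_decode (u := e.1.1) (w := e.1.2) he2
      rw [he1] at hR0
      exact hv e.1.2 (Or.inl hR0)
  · -- BLUE
    refine ⟨?_, ?_, ?_, ?_, ?_⟩
    · -- acyclicity
      intro v hcy
      obtain ⟨cyP⟩ := TSB.transGen_cyc hcy
      have hin : ∀ j, (fun u v => B u v ∨
          (u, v) = (a, s) ∨ (u, v) = (a, t) ∨ (u, v) = (s, b) ∨ (u, v) = (t, b))
          (cyP.c (j + cyP.n - 1)) (cyP.c j) := by
        intro j
        have h := cyP.hS (j + cyP.n - 1)
        have he : j + cyP.n - 1 + 1 = j + cyP.n := by have := cyP.hpos; omega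
        rw [he, cyP.hper] at h
        exact h
      have hnoa : ∀ j, cyP.c j ≠ a := by
        intro j hj
        have h := hin j
        rw [hj] at h
        rcases h with h | h | h | h | h
        · have hinn := hBinner _ _ h
          have h2 := ha _ (hsymm _ _ (hBE _ _ h)) (TSB.pair_notmem hinn)
          exact ((hexactly _ _ (hBE _ _ h) hinn).2.2.2 h) h2
        · exact hsa (Prod.ext_iff.mp h).2.symm
        · exact hat (Prod.ext_iff.mp h).2
        · exact hab (Prod.ext_iff.mp h).2
        · exact hab (Prod.ext_iff.mp h).2
      have hnos : ∀ j, cyP.c j ≠ s := by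
        intro j hj
        have h := hin j
        rw [hj] at h
        rcases h with h | h | h | h | h
        · have hinn := hBinner _ _ h
          have h2 := hs _ (hsymm _ _ (hBE _ _ h)) (TSB.pair_notmem hinn)
          exact ((hexactly _ _ (hsymm _ _ (hBE _ _ h))
            (TSB.pair_notmem hinn)).2.1 h2).2.2 h
        · exact hnoa _ (Prod.ext_iff.mp h).1
        · exact hst (Prod.ext_iff.mp h).2
        · exact hsb (Prod.ext_iff.mp h).2
        · exact hsb (Prod.ext_iff.mp h).2
      have hnot : ∀ j, cyP.c j ≠ t := by
        intro j hj
        have h := hin j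
        rw [hj] at h
        rcases h with h | h | h | h | h
        · have hinn := hBinner _ _ h
          have h2 := ht _ (hsymm _ _ (hBE _ _ h)) (TSB.pair_notmem hinn)
          exact ((hexactly _ _ (hBE _ _ h) hinn).2.1 h2).2.1 h
        · exact hst (Prod.ext_iff.mp h).2.symm
        · exact hnoa _ (Prod.ext_iff.mp h).1
        · exact htb (Prod.ext_iff.mp h).2
        · exact htb (Prod.ext_iff.mp h).2
      have hnob : ∀ j, cyP.c j ≠ b := by
        intro j hj
        have h := cyP.hS j
        rw [hj] at h
        rcases h with h | h | h | h | h
        · have hinn := hBinner _ _ h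
          have h2 := hb _ (hBE _ _ h) hinn
          exact ((hexactly _ _ (hBE _ _ h) hinn).2.2.2 h) h2
        · exact hab (Prod.ext_iff.mp h).1.symm
        · exact hab (Prod.ext_iff.mp h).1.symm
        · exact hsb (Prod.ext_iff.mp h).1.symm
        · exact htb (Prod.ext_iff.mp h).1.symm
      have hB : ∀ i, B (cyP.c i) (cyP.c (i + 1)) := by
        intro i
        rcases cyP.hS i with h | h | h | h | h
        · exact h
        · exact absurd (Prod.ext_iff.mp h).1 (hnoa i)
        · exact absurd (Prod.ext_iff.mp h).1 (hnoa i)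
        · exact absurd (Prod.ext_iff.mp h).1 (hnos i)
        · exact absurd (Prod.ext_iff.mp h).1 (hnot i)
      exact TSB.TCtx.no_cyc T.swap ⟨cyP.n, cyP.c, cyP.hpos, cyP.hper, cyP.hinj, hB⟩
    · -- no edge into a
      intro u h
      rcases h with h | h | h | h | h
      · have hinn := hBinner _ _ h
        have h2 := ha _ (hsymm _ _ (hBE _ _ h)) (TSB.pair_notmem hinn)
        exact ((hexactly _ _ (hBE _ _ h) hinn).2.2.2 h) h2
      · exact hsa (Prod.ext_iff.mp h).2.symm
      · exact hat (Prod.ext_iff.mp h).2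
      · exact hab (Prod.ext_iff.mp h).2
      · exact hab (Prod.ext_iff.mp h).2
    · -- unique source a
      intro v hv
      by_contra hne
      by_cases hvs : v = s
      · exact hv a (Or.inr (Or.inl (by rw [hvs])))
      by_cases hvt : v = t
      · exact hv a (Or.inr (Or.inr (Or.inl (by rw [hvt]))))
      by_cases hvb : v = b
      · exact hv s (Or.inr (Or.inr (Or.inr (Or.inl (by rw [hvb])))))
      have hvin : v ∉ ({s, a, t, b} : Set V) := by
        simp only [Set.mem_insert_iff, Set.mem_singleton_iff]
        push_neg
        exact ⟨hvs, hne, hvt, hvb⟩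
      obtain ⟨e, he1, he2⟩ := (hblocks v hvin).2 3
      have hB3 := T.cat3_decode (u := e.1.1) (w := e.1.2) e.2
        (TSB.innerPair (by rw [he1]; exact hvin)) he2
      rw [he1] at hB3
      exact hv e.1.2 (Or.inl hB3)
    · -- no edge out of b
      intro u h
      rcases h with h | h | h | h | h
      · have hinn := hBinner _ _ h
        have h2 := hb _ (hBE _ _ h) hinn
        exact ((hexactly _ _ (hBE _ _ h) hinn).2.2.2 h) h2
      · exact hab (Prod.ext_iff.mp h).1.symm
      · exact hab (Prod.ext_iff.mp h).1.symm
      · exact hsb (Prod.ext_iff.mp h).1.symm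
      · exact htb (Prod.ext_iff.mp h).1.symm
    · -- unique sink b
      intro v hv
      by_contra hne
      by_cases hva : v = a
      · exact hv s (Or.inr (Or.inl (by rw [hva])))
      by_cases hvs : v = s
      · exact hv b (Or.inr (Or.inr (Or.inr (Or.inl (by rw [hvs])))))
      by_cases hvt : v = t
      · exact hv b (Or.inr (Or.inr (Or.inr (Or.inr (by rw [hvt])))))
      have hvin : v ∉ ({s, a, t, b} : Set V) := by
        simp only [Set.mem_insert_iff, Set.mem_singleton_iff]
        push_neg
        exact ⟨hvs, hva, hvt, hne⟩
      obtain ⟨e, he1, he2⟩ := (hblocks v hvin).2 1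
      have hB1 := T.cat1_decode (u := e.1.1) (w := e.1.2) he2
      rw [he1] at hB1
      exact hv e.1.2 (Or.inl hB1)
end

section
/- Let C_1, …, C_w be the canonical chain partition of a finite 2-dimensional poset P with realizer [L_1, L_2], and let C_i^+ be obtained from C_i by successively adding all compatible elements of C_{i-1}, C_{i-2}, …, C_1 in this order. Then each C_i^+ is a maximal chain of the subposet of P induced by C_1 ∪ … ∪ C_i. -/
open Finset

attribute [local instance] Classical.propDecidable

/-- The canonical antichain partition (0-indexed) of the subposet induced on `S`,
with respect to a strict relation `lt`. -/
noncomputable def canonAntichain {α : Type*} [DecidableEq α] (lt : α → α → Prop) (S : Finset α) :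
    ℕ → Finset α
  | j =>
    let R := S \ (Finset.range j).attach.biUnion (fun i => canonAntichain lt S i.1)
    @Finset.filter α (fun x => ∀ y ∈ R, ¬ lt y x) (fun _ => Classical.dec _) R
  decreasing_by exact Finset.mem_range.mp i.2

/-- Add to the chain `S` all elements of `T` which are compatible with `S`,
i.e. comparable to every element of `S`. -/
noncomputable def extendChain {α : Type*} [DecidableEq α] [PartialOrder α]
    (S T : Finset α) : Finset α :=
  S ∪ T.filter (fun x => ∀ y ∈ S, x ≤ y ∨ y ≤ x)

/-- `chainCover C i` is `C_i⁺`: starting from `C_i`, successively add all compatible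
elements of `C_{i-1}, C_{i-2}, …, C_0`, in this order. -/
noncomputable def chainCover {α : Type*} [DecidableEq α] [PartialOrder α]
    (C : ℕ → Finset α) (i : ℕ) : Finset α :=
  (List.range i).reverse.foldl (fun S j => extendChain S (C j)) (C i)

namespace ChainCoverAux

variable {α : Type*} [DecidableEq α] [PartialOrder α]

/-- Comparability predicate on finsets. -/
def Ch (S : Finset α) : Prop := ∀ a ∈ S, ∀ b ∈ S, a ≠ b → a ≤ b ∨ b ≤ a

lemma ec_left {S T : Finset α} : S ⊆ extendChain S T :=
  Finset.subset_union_left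

lemma ec_subset {S T : Finset α} : extendChain S T ⊆ S ∪ T :=
  Finset.union_subset_union_right (Finset.filter_subset _ _)

lemma ec_mem {S T : Finset α} {x : α} (hx : x ∈ T) (h : ∀ y ∈ S, x ≤ y ∨ y ≤ x) :
    x ∈ extendChain S T := by
  apply Finset.mem_union_right
  exact Finset.mem_filter.mpr ⟨hx, h⟩

lemma ec_chain {S T : Finset α} (hS : Ch S) (hT : Ch T) : Ch (extendChain S T) := by
  intro a ha b hb hab
  rcases Finset.mem_union.mp ha with ha | ha <;> rcases Finset.mem_union.mp hb with hb | hb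
  · exact hS a ha b hb hab
  · rcases (Finset.mem_filter.mp hb).2 a ha with h | h
    · exact Or.inr h
    · exact Or.inl h
  · exact (Finset.mem_filter.mp ha).2 b hb
  · exact hT a (Finset.mem_filter.mp ha).1 b (Finset.mem_filter.mp hb).1 hab

variable (C : ℕ → Finset α)

lemma foldl_mono : ∀ (L : List ℕ) (S : Finset α),
    S ⊆ L.foldl (fun S j => extendChain S (C j)) S
  | [], S => Finset.Subset.refl S
  | j :: L, S => Finset.Subset.trans ec_left (foldl_mono L (extendChain S (C j)))

lemma foldl_subset : ∀ (L : List ℕ) (S U : Finset α), S ⊆ U → (∀ j ∈ L, C j ⊆ U) →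
    L.foldl (fun S j => extendChain S (C j)) S ⊆ U
  | [], S, U, hS, _ => hS
  | j :: L, S, U, hS, hC => by
    apply foldl_subset L _ U
    · exact Finset.Subset.trans ec_subset
        (Finset.union_subset hS (hC j List.mem_cons_self))
    · exact fun k hk => hC k (List.mem_cons_of_mem j hk)

lemma foldl_chain (hC : ∀ j, Ch (C j)) : ∀ (L : List ℕ) (S : Finset α), Ch S →
    Ch (L.foldl (fun S j => extendChain S (C j)) S)
  | [], _S, hS => hS
  | j :: L, _S, hS => foldl_chain hC L _ (ec_chain hS (hC j))

lemma foldl_max : ∀ (L : List ℕ) (S : Finset α), ∀ j ∈ L, ∀ x ∈ C j,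
    (∀ y ∈ L.foldl (fun S j => extendChain S (C j)) S, x ≤ y ∨ y ≤ x) →
    x ∈ L.foldl (fun S j => extendChain S (C j)) S
  | [], _, j, hj, _, _, _ => absurd hj List.not_mem_nil
  | j' :: L, S, j, hj, x, hx, hcomp => by
    rcases List.mem_cons.mp hj with rfl | hj
    · simp only [List.foldl_cons]
      apply foldl_mono C L (extendChain S (C j))
      apply ec_mem hx
      intro y hy
      exact hcomp y (foldl_mono C L _ (ec_left hy))
    · exact foldl_max L (extendChain S (C j')) j hj x hx hcomp

end ChainCoverAux

/-- Let `C_0, …` be the canonical chain partition of a finite 2-dimensional poset `P`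
with realizer `[L₁, L₂]` (the canonical antichain partition of the primary conjugate
`Q = L₁ ∩ reverse L₂`, viewed as chains of `P`), and let `C_i⁺` be obtained from `C_i`
by successively adding all compatible elements of `C_{i-1}, …, C_0` in this order.
Then each `C_i⁺` is a maximal chain of the subposet of `P` induced on
`C_0 ∪ … ∪ C_i`. -/
theorem chainCover_maximal_chain {X : Type*} [Fintype X] [DecidableEq X]
    [PartialOrder X]
    (r₁ r₂ : X → X → Prop) (h₁ : IsLinearOrder X r₁) (h₂ : IsLinearOrder X r₂)
    (hreal : ∀ a b : X, a ≤ b ↔ (r₁ a b ∧ r₂ a b)) :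
    let qlt : X → X → Prop := fun a b => (r₁ a b ∧ r₂ b a) ∧ a ≠ b
    let C : ℕ → Finset X := canonAntichain qlt Finset.univ
    ∀ i : ℕ,
      let U : Finset X := (Finset.range (i + 1)).biUnion C
      chainCover C i ⊆ U ∧
      IsChain (· ≤ ·) ((chainCover C i : Finset X) : Set X) ∧
      (∀ S : Finset X, S ⊆ U → IsChain (· ≤ ·) (S : Set X) →
        chainCover C i ⊆ S → S = chainCover C i) := by
  intro qlt C i U
  -- each C j is a chain of P
  have hCch : ∀ j, ChainCoverAux.Ch (C j) := by
    intro j a ha b hb hab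
    have hanti : ¬ qlt a b ∧ ¬ qlt b a := by
      have ha' := ha; have hb' := hb
      rw [show C = canonAntichain qlt Finset.univ from rfl, canonAntichain] at ha' hb'
      simp only [Finset.mem_filter] at ha' hb'
      exact ⟨hb'.2 a ha'.1, ha'.2 b hb'.1⟩
    have hq1 : ¬ (r₁ a b ∧ r₂ b a) := fun h => hanti.1 ⟨h, hab⟩
    have hq2 : ¬ (r₁ b a ∧ r₂ a b) := fun h => hanti.2 ⟨h, Ne.symm hab⟩
    rcases h₁.toTotal.total a b with hr1 | hr1
    · rcases h₂.toTotal.total a b with hr2 | hr2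
      · exact Or.inl ((hreal a b).mpr ⟨hr1, hr2⟩)
      · exact absurd ⟨hr1, hr2⟩ hq1
    · rcases h₂.toTotal.total a b with hr2 | hr2
      · exact absurd ⟨hr1, hr2⟩ hq2
      · exact Or.inr ((hreal b a).mpr ⟨hr1, hr2⟩)
  have hCU : ∀ j ∈ (List.range i).reverse, C j ⊆ U := by
    intro j hj
    have hj' : j < i := List.mem_range.mp (List.mem_reverse.mp hj)
    intro x hx
    exact Finset.mem_biUnion.mpr ⟨j, Finset.mem_range.mpr (Nat.lt_succ_of_lt hj'), hx⟩
  have hCiU : C i ⊆ U := fun x hx =>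
    Finset.mem_biUnion.mpr ⟨i, Finset.self_mem_range_succ i, hx⟩
  have hsub : chainCover C i ⊆ U :=
    ChainCoverAux.foldl_subset C _ (C i) U hCiU hCU
  have hchain : ChainCoverAux.Ch (chainCover C i) :=
    ChainCoverAux.foldl_chain C hCch _ (C i) (hCch i)
  refine ⟨hsub, ?_, ?_⟩
  · intro a ha b hb hab
    rcases hchain a (Finset.mem_coe.mp ha) b (Finset.mem_coe.mp hb) hab with h | h
    · exact Or.inl h
    · exact Or.inr h
  · intro S hSU hSch hsubS
    apply Finset.Subset.antisymm _ hsubS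
    intro x hxS
    obtain ⟨j, hjmem, hxj⟩ := Finset.mem_biUnion.mp (hSU hxS)
    have hcomp : ∀ y ∈ chainCover C i, x ≤ y ∨ y ≤ x := by
      intro y hy
      by_cases hxy : x = y
      · exact Or.inl (le_of_eq hxy)
      · rcases hSch (Finset.mem_coe.mpr hxS) (Finset.mem_coe.mpr (hsubS hy)) hxy with h | h
        · exact Or.inl h
        · exact Or.inr h
    rcases Nat.lt_succ_iff_lt_or_eq.mp (Finset.mem_range.mp hjmem) with hj | rfl
    · exact ChainCoverAux.foldl_max C (List.range i).reverse (C i) j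
        (List.mem_reverse.mpr (List.mem_range.mpr hj)) x hxj hcomp
    · exact ChainCoverAux.foldl_mono C (List.range j).reverse (C j) hxj
end
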